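/- arXiv:1503.00892 — 2 statements merged into one kernel-verified Lean document; each statement's English description precedes it below -/
import Mathlib

section
/- Suppose that 𝒜 satisfies the dominated splitting condition and Φ satisfies the strong separation condition. Then there is a constant c₁ > 0 such that for every i ∈ Σ⁺, every x ∈ Λ and every n ≥ 1, if (j₁,…,jₙ) ∈ {1,…,N}ⁿ is the unique word with x ∈ f_{j₁}∘⋯∘f_{jₙ}(Λ) (unique by the SSC), then B^{ss}_{c₁⁻¹ α₂(A_{j₁}⋯A_{jₙ})}(x,i) ⊆ f_{j₁}∘⋯∘f_{jₙ}(Λ) ∩ (x + e_ss(i)) ⊆ B^{ss}_{c₁ α₂(A_{j₁}⋯A_{jₙ})}(x,i), where B^{ss}_r(x,i) = {z ∈ Λ ∩ (x + e_ss(i)) : |z − x| ≤ r}. -/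
open MeasureTheory Filter Metric Set
open scoped ENNReal Topology NNReal

noncomputable section

/-- The Euclidean plane. -/
abbrev E2 := EuclideanSpace ℝ (Fin 2)

/-- View a vector `Fin 2 → ℝ` as a point of the Euclidean plane. -/
def toE2 (v : Fin 2 → ℝ) : E2 := WithLp.toLp 2 v

/-- The largest singular value `α₁(B)` of a `2×2` real matrix, i.e. the operator norm of the
induced linear map on the Euclidean plane. -/
noncomputable def alpha1 (B : Matrix (Fin 2) (Fin 2) ℝ) : ℝ :=
  ‖LinearMap.toContinuousLinearMap (Matrix.toEuclideanLin B)‖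

/-- The smallest singular value `α₂(B)` of a `2×2` real matrix; for a non-singular `2×2`
matrix one has `α₁(B) * α₂(B) = |det B|`. -/
noncomputable def alpha2 (B : Matrix (Fin 2) (Fin 2) ℝ) : ℝ :=
  |B.det| / alpha1 B

/-- Product `A_{w₁} ⋯ A_{wₙ}` of matrices along a finite word `w`. -/
def listProd {N : ℕ} (A : Fin N → Matrix (Fin 2) (Fin 2) ℝ) (w : List (Fin N)) :
    Matrix (Fin 2) (Fin 2) ℝ :=
  (w.map A).prod

/-- `A_{x₀} A_{x₁} ⋯ A_{x_{n-1}}` along an infinite word `x`. -/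
def prodA {N : ℕ} (A : Fin N → Matrix (Fin 2) (Fin 2) ℝ) (x : ℕ → Fin N) (n : ℕ) :
    Matrix (Fin 2) (Fin 2) ℝ :=
  listProd A ((List.range n).map x)

/-- `A_{x_{n-1}} ⋯ A_{x₁} A_{x₀}` along an infinite word `x` (forward dynamical order). -/
def prodRev {N : ℕ} (A : Fin N → Matrix (Fin 2) (Fin 2) ℝ) (x : ℕ → Fin N) (n : ℕ) :
    Matrix (Fin 2) (Fin 2) ℝ :=
  listProd A (((List.range n).reverse).map x)

/-- The dominated splitting condition: `α₁/α₂ ≥ C e^{δ n}` for all words of length `n`. -/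
def DominatedSplitting {N : ℕ} (A : Fin N → Matrix (Fin 2) (Fin 2) ℝ) : Prop :=
  ∃ C > (0:ℝ), ∃ δ > (0:ℝ), ∀ w : List (Fin N),
    C * Real.exp (δ * w.length) ≤ alpha1 (listProd A w) / alpha2 (listProd A w)

/-- The affine map `x ↦ A_i x + t_i`. -/
def affIFS {N : ℕ} (A : Fin N → Matrix (Fin 2) (Fin 2) ℝ) (t : Fin N → E2)
    (i : Fin N) (x : E2) : E2 :=
  toE2 ((A i).mulVec x) + t i

/-- Composition `f_{w₁} ∘ ⋯ ∘ f_{wₙ}` along a finite word. -/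
def mapWord {N : ℕ} (f : Fin N → E2 → E2) (w : List (Fin N)) : E2 → E2 :=
  w.foldr (fun i g => f i ∘ g) id

/-- The strong separation condition for an IFS on the plane. -/
def SSC {N : ℕ} (f : Fin N → E2 → E2) : Prop :=
  ∃ O : Set E2, IsOpen O ∧ O.Nonempty ∧ Bornology.IsBounded O ∧
    (∀ i, f i '' closure O ⊆ O) ∧
    Pairwise fun i j => Disjoint (f i '' closure O) (f j '' closure O)

/-- `Λ` is the attractor of the IFS `f`: the (unique) nonempty compact set with
`Λ = ⋃ i f_i(Λ)`. -/
def IsAttractor {N : ℕ} (f : Fin N → E2 → E2) (Λ : Set E2) : Prop :=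
  IsCompact Λ ∧ Λ.Nonempty ∧ Λ = ⋃ i, f i '' Λ

/-- The natural projection `π₊(i) = ∑ₙ A_{i₀}⋯A_{i_{n-1}} t_{iₙ} = lim f_{i₀}∘⋯∘f_{iₙ}(0)`. -/
noncomputable def piPlus {N : ℕ} (A : Fin N → Matrix (Fin 2) (Fin 2) ℝ)
    (t : Fin N → E2) (x : ℕ → Fin N) : E2 :=
  ∑' n, toE2 ((prodA A x n).mulVec (t (x n)))

/-- `ν` is the Bernoulli product measure with marginal `p` on `Σ⁺ = {1,…,N}^ℕ`,
characterized by its values on cylinder sets. -/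
def IsBernoulli {N : ℕ} (p : Fin N → ℝ) (ν : Measure (ℕ → Fin N)) : Prop :=
  ∀ (n : ℕ) (w : Fin n → Fin N),
    ν {x | ∀ k : Fin n, x k.val = w k} = ∏ k, ENNReal.ofReal (p (w k))

/-- The entropy `h_ν = -∑ p_i log p_i` of the Bernoulli measure with marginal `p`. -/
noncomputable def entropy {N : ℕ} (p : Fin N → ℝ) : ℝ := -∑ i, p i * Real.log (p i)

/-- The Hausdorff dimension of a measure: `dim_H m = inf { dim_H s : m(sᶜ) = 0 }`. -/
noncomputable def mdimH {X : Type*} [EMetricSpace X] {mX : MeasurableSpace X}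
    (m : Measure X) : ℝ≥0∞ :=
  ⨅ (s : Set X) (_ : m sᶜ = 0), dimH s

/-- A measure is exact dimensional with dimension `d` if the local dimension
`lim_{r→0⁺} log m(B_r(x)) / log r` exists and equals `d` at `m`-a.e. point. -/
def IsExactDimensional {X : Type*} [PseudoMetricSpace X] {mX : MeasurableSpace X}
    (m : Measure X) (d : ℝ) : Prop :=
  ∀ᵐ z ∂m, Tendsto (fun r : ℝ => Real.log (m (Metric.ball z r)).toReal / Real.log r)
    (𝓝[>] (0:ℝ)) (𝓝 d)

/-- `χs ≤ χss` are the Lyapunov exponents of `(A, ν)`: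
`(1/n) log α₁(A_{x₀}⋯A_{x_{n-1}}) → -χs` and `(1/n) log α₂(A_{x₀}⋯A_{x_{n-1}}) → -χss`
for `ν`-a.e. `x`. -/
def LyapunovExponents {N : ℕ} (A : Fin N → Matrix (Fin 2) (Fin 2) ℝ)
    (ν : Measure (ℕ → Fin N)) (χs χss : ℝ) : Prop :=
  0 < χs ∧ χs ≤ χss ∧
  (∀ᵐ x ∂ν, Tendsto (fun n : ℕ => Real.log (alpha1 (prodA A x n)) / n) atTop (𝓝 (-χs))) ∧
  (∀ᵐ x ∂ν, Tendsto (fun n : ℕ => Real.log (alpha2 (prodA A x n)) / n) atTop (𝓝 (-χss)))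

/-- The Lyapunov dimension `min {2, h/χs, 1 + (h - χs)/χss}`. -/
noncomputable def dimLyap {N : ℕ} (p : Fin N → ℝ) (χs χss : ℝ) : ℝ :=
  min 2 (min (entropy p / χs) (1 + (entropy p - χs) / χss))

/-- Left shift on `Σ⁺`. -/
def shift {N : ℕ} (x : ℕ → Fin N) : ℕ → Fin N := fun n => x (n + 1)

/-- `ess` is the family of strong-stable directions of `A`: a family of lines,
equivariant (`A_{x₀} e_ss(x) = e_ss(σx)`), along which the products `A_{x_{n-1}}⋯A_{x₀}`
contract at a rate exponentially faster than `α₁`; this characterizes the strong-stable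
directions `e_ss(x) = ⋂ₙ A_{x₀}⁻¹⋯A_{x_{n-1}}⁻¹(cl Mᶜ)` obtained from a forward-invariant
multicone `M` under the dominated splitting condition. -/
def IsStrongStableDirections {N : ℕ} (A : Fin N → Matrix (Fin 2) (Fin 2) ℝ)
    (ess : (ℕ → Fin N) → Submodule ℝ E2) : Prop :=
  (∀ x, Module.finrank ℝ (ess x) = 1) ∧
  (∀ x, Submodule.map (Matrix.toEuclideanLin (A (x 0))) (ess x) = ess (shift x)) ∧
  ∃ C > (0:ℝ), ∃ δ > (0:ℝ), ∀ (x : ℕ → Fin N) (n : ℕ), ∀ v ∈ ess x,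
    ‖toE2 ((prodRev A x n).mulVec v)‖ ≤ C * Real.exp (-δ * n) * alpha1 (prodRev A x n) * ‖v‖

/-- Orthogonal projection of the plane onto the line through the origin
perpendicular to the line `ℓ`. -/
noncomputable def projPerp (ℓ : Submodule ℝ E2) (v : E2) : E2 :=
  (ℓᗮ.orthogonalProjectionOnto v : E2)

/-- The unit vector with angle `θ`. -/
noncomputable def dirVec (θ : ℝ) : E2 := toE2 ![Real.cos θ, Real.sin θ]

/-- The line through the origin with angle `θ`;
angles in `[0,π)` parametrize the projective space `P¹`. -/
noncomputable def lineOf (θ : ℝ) : Submodule ℝ E2 := Submodule.span ℝ {dirVec θ}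

/-- The standard positive cone `{(x,y) ≠ 0 : xy ≥ 0}`. -/
def StdPosCone : Set E2 := {v | v ≠ 0 ∧ 0 ≤ v 0 * v 1}

/-- A multicone: a finite disjoint union of cones (images of the standard positive cone
under linear isomorphisms). -/
def IsMulticone (M : Set E2) : Prop :=
  ∃ (k : ℕ) (T : Fin k → E2 ≃ₗ[ℝ] E2),
    M = (⋃ j, T j '' StdPosCone) ∧
    Pairwise fun j j' => Disjoint (T j '' StdPosCone) ((T j') '' StdPosCone)

/-- The backward non-overlapping condition: the inverse matrices map the interior of some
multicone `M` into itself with pairwise disjoint images. -/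
def BackwardNonOverlapping {N : ℕ} (A : Fin N → Matrix (Fin 2) (Fin 2) ℝ) : Prop :=
  ∃ M : Set E2, IsMulticone M ∧
    (∀ i, (fun v : E2 => toE2 ((A i)⁻¹.mulVec v)) '' interior M ⊆ interior M) ∧
    Pairwise fun i j => Disjoint ((fun v : E2 => toE2 ((A i)⁻¹.mulVec v)) '' interior M)
      ((fun v : E2 => toE2 ((A j)⁻¹.mulVec v)) '' interior M)


/-! ### Auxiliary development -/

open scoped RealInnerProductSpace

namespace SA7

/-- Rotation by 90 degrees. -/
def Jv (x : E2) : E2 := toE2 ![-(x 1), x 0]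

/-- The standard area form. -/
def om (x y : E2) : ℝ := x 0 * y 1 - x 1 * y 0

lemma toE2_eq (v : Fin 2 → ℝ) : toE2 v = v := rfl

lemma inner_two (x y : E2) : ⟪x, y⟫ = x 0 * y 0 + x 1 * y 1 := by
  simp [PiLp.inner_apply, Fin.sum_univ_two, RCLike.inner_apply]; ring

lemma norm_sq_two (x : E2) : ‖x‖ ^ 2 = x 0 ^ 2 + x 1 ^ 2 := by
  rw [← real_inner_self_eq_norm_sq, inner_two]; ring

lemma norm_eq_of_sq_eq {x y : E2} (h : ‖x‖ ^ 2 = ‖y‖ ^ 2) : ‖x‖ = ‖y‖ := by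
  nlinarith [norm_nonneg x, norm_nonneg y]

lemma Jv_apply0 (x : E2) : (Jv x) 0 = -(x 1) := rfl
lemma Jv_apply1 (x : E2) : (Jv x) 1 = x 0 := rfl

lemma norm_Jv (x : E2) : ‖Jv x‖ = ‖x‖ := by
  apply norm_eq_of_sq_eq
  rw [norm_sq_two, norm_sq_two, Jv_apply0, Jv_apply1]; ring

lemma om_eq_inner (x y : E2) : om x y = ⟪Jv x, y⟫ := by
  rw [inner_two, Jv_apply0, Jv_apply1, om]; ring

lemma abs_om_le (x y : E2) : |om x y| ≤ ‖x‖ * ‖y‖ := by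
  rw [om_eq_inner, ← norm_Jv x]
  exact abs_real_inner_le_norm _ _

lemma om_smul_left (c : ℝ) (x y : E2) : om (c • x) y = c * om x y := by
  show (c • x) 0 * y 1 - (c • x) 1 * y 0 = c * (x 0 * y 1 - x 1 * y 0)
  have h0 : (c • x) 0 = c * x 0 := rfl
  have h1 : (c • x) 1 = c * x 1 := rfl
  rw [h0, h1]; ring

lemma om_add_right (x a b : E2) : om x (a + b) = om x a + om x b := by
  show x 0 * (a+b) 1 - x 1 * (a+b) 0 = _
  have h0 : (a + b) 0 = a 0 + b 0 := rfl
  have h1 : (a + b) 1 = a 1 + b 1 := rfl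
  rw [h0, h1]; unfold om; ring

lemma om_smul_right (c : ℝ) (x y : E2) : om x (c • y) = c * om x y := by
  show x 0 * (c • y) 1 - x 1 * (c • y) 0 = _
  have h0 : (c • y) 0 = c * y 0 := rfl
  have h1 : (c • y) 1 = c * y 1 := rfl
  rw [h0, h1]; unfold om; ring

lemma om_self (x : E2) : om x x = 0 := by unfold om; ring

lemma om_Jv_self (u : E2) : om u (Jv u) = ‖u‖ ^ 2 := by
  rw [norm_sq_two]; unfold om; rw [Jv_apply0, Jv_apply1]; ring

lemma mulVec_apply0 (B : Matrix (Fin 2) (Fin 2) ℝ) (v : Fin 2 → ℝ) :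
    B.mulVec v 0 = B 0 0 * v 0 + B 0 1 * v 1 := by
  simp [Matrix.mulVec, dotProduct, Fin.sum_univ_two]

lemma mulVec_apply1 (B : Matrix (Fin 2) (Fin 2) ℝ) (v : Fin 2 → ℝ) :
    B.mulVec v 1 = B 1 0 * v 0 + B 1 1 * v 1 := by
  simp [Matrix.mulVec, dotProduct, Fin.sum_univ_two]

lemma om_mulVec (B : Matrix (Fin 2) (Fin 2) ℝ) (x y : E2) :
    om (toE2 (B.mulVec x)) (toE2 (B.mulVec y)) = B.det * om x y := by
  show B.mulVec x 0 * B.mulVec y 1 - B.mulVec x 1 * B.mulVec y 0 = _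
  rw [mulVec_apply0, mulVec_apply0, mulVec_apply1, mulVec_apply1, Matrix.det_fin_two]
  unfold om; ring

/-- Orthonormal expansion in the basis `u, Jv u` for a unit vector `u`. -/
lemma expansion {u : E2} (hu : ‖u‖ = 1) (x : E2) :
    x = ⟪x, u⟫ • u + om u x • Jv u := by
  have h1 : u 0 ^ 2 + u 1 ^ 2 = 1 := by rw [← norm_sq_two, hu]; norm_num
  ext j
  have h0 : x 0 = (⟪x, u⟫ • u + om u x • Jv u) 0 := by
    show x 0 = ⟪x, u⟫ * u 0 + om u x * (Jv u) 0
    rw [inner_two, Jv_apply0]; unfold om; linear_combination (-(x 0)) * h1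
  have h2 : x 1 = (⟪x, u⟫ • u + om u x • Jv u) 1 := by
    show x 1 = ⟪x, u⟫ * u 1 + om u x * (Jv u) 1
    rw [inner_two, Jv_apply1]; unfold om; linear_combination (-(x 1)) * h1
  match j with
  | 0 => exact h0
  | 1 => exact h2

/-- Parseval for the orthonormal basis `u, Jv u`. -/
lemma parseval {u : E2} (hu : ‖u‖ = 1) (x : E2) :
    ‖x‖ ^ 2 = ⟪x, u⟫ ^ 2 + om u x ^ 2 := by
  have h1 : u 0 ^ 2 + u 1 ^ 2 = 1 := by rw [← norm_sq_two, hu]; norm_num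
  rw [norm_sq_two, inner_two]; unfold om
  linear_combination (-(x 0 ^ 2) - x 1 ^ 2) * h1

end SA7
namespace SA7

/-- The operator-norm bound. -/
lemma norm_mulVec_le (B : Matrix (Fin 2) (Fin 2) ℝ) (x : E2) :
    ‖toE2 (B.mulVec x)‖ ≤ alpha1 B * ‖x‖ :=
  (LinearMap.toContinuousLinearMap (Matrix.toEuclideanLin B)).le_opNorm x

lemma alpha1_nonneg (B : Matrix (Fin 2) (Fin 2) ℝ) : 0 ≤ alpha1 B := norm_nonneg _

lemma alpha1_le_of_bound {B : Matrix (Fin 2) (Fin 2) ℝ} {c : ℝ} (hc : 0 ≤ c)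
    (h : ∀ x : E2, ‖toE2 (B.mulVec x)‖ ≤ c * ‖x‖) : alpha1 B ≤ c :=
  ContinuousLinearMap.opNorm_le_bound _ hc h

lemma alpha1_mul_le (P B : Matrix (Fin 2) (Fin 2) ℝ) :
    alpha1 (P * B) ≤ alpha1 P * alpha1 B := by
  apply alpha1_le_of_bound (mul_nonneg (alpha1_nonneg P) (alpha1_nonneg B))
  intro x
  have h1 : toE2 ((P * B).mulVec x) = toE2 (P.mulVec (B.mulVec x)) := by
    rw [Matrix.mulVec_mulVec]
  rw [h1, mul_assoc]
  calc ‖toE2 (P.mulVec (toE2 (B.mulVec x)))‖ ≤ alpha1 P * ‖toE2 (B.mulVec x)‖ :=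
        norm_mulVec_le P (toE2 (B.mulVec x))
    _ ≤ alpha1 P * (alpha1 B * ‖x‖) := by
        have := norm_mulVec_le B x
        nlinarith [alpha1_nonneg P]

lemma alpha1_one_le : alpha1 (1 : Matrix (Fin 2) (Fin 2) ℝ) ≤ 1 := by
  apply alpha1_le_of_bound zero_le_one
  intro x
  rw [Matrix.one_mulVec, one_mul]
  exact le_of_eq rfl

lemma norm_smul_mulVec (c : ℝ) (x : E2) :
    ‖toE2 ((c • (1 : Matrix (Fin 2) (Fin 2) ℝ)).mulVec x)‖ = |c| * ‖x‖ := by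
  have h : (c • (1 : Matrix (Fin 2) (Fin 2) ℝ)).mulVec x = c • x := by
    rw [Matrix.smul_mulVec, Matrix.one_mulVec]
  show ‖toE2 ((c • (1 : Matrix (Fin 2) (Fin 2) ℝ)).mulVec x)‖ = _
  rw [h]
  show ‖c • (toE2 x)‖ = _
  rw [norm_smul, Real.norm_eq_abs]
  rfl

/-- Adjointness of transpose w.r.t. the Euclidean inner product. -/
lemma inner_transpose_mulVec (B : Matrix (Fin 2) (Fin 2) ℝ) (x y : E2) :
    ⟪toE2 (B.transpose.mulVec x), y⟫ = ⟪x, toE2 (B.mulVec y)⟫ := by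
  rw [inner_two, inner_two]
  simp only [toE2_eq, mulVec_apply0, mulVec_apply1, Matrix.transpose_apply]
  ring

lemma inner_self_E2 (x : E2) : ⟪x, x⟫ = ‖x‖ ^ 2 := real_inner_self_eq_norm_sq x

lemma alpha1_transpose_le (B : Matrix (Fin 2) (Fin 2) ℝ) :
    alpha1 B.transpose ≤ alpha1 B := by
  apply alpha1_le_of_bound (alpha1_nonneg B)
  intro x
  set w : E2 := toE2 (B.transpose.mulVec x) with hw
  rcases eq_or_ne ‖w‖ 0 with h0 | h0
  · rw [h0]
    exact mul_nonneg (alpha1_nonneg B) (norm_nonneg x)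
  have h1 : ‖w‖ ^ 2 = ⟪x, toE2 (B.mulVec w)⟫ := by
    rw [← inner_transpose_mulVec, ← hw, inner_self_E2]
  have h2 : ⟪x, toE2 (B.mulVec w)⟫ ≤ ‖x‖ * ‖toE2 (B.mulVec w)‖ := by
    have := abs_real_inner_le_norm x (toE2 (B.mulVec w))
    exact (le_abs_self _).trans this
  have h3 := norm_mulVec_le B w
  have hwpos : 0 < ‖w‖ := lt_of_le_of_ne (norm_nonneg w) (Ne.symm h0)
  nlinarith [norm_nonneg x]

lemma alpha1_transpose (B : Matrix (Fin 2) (Fin 2) ℝ) : alpha1 B.transpose = alpha1 B := by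
  refine le_antisymm (alpha1_transpose_le B) ?_
  have := alpha1_transpose_le B.transpose
  rwa [Matrix.transpose_transpose] at this

lemma adjugate_mulVec_norm (B : Matrix (Fin 2) (Fin 2) ℝ) (x : E2) :
    ‖toE2 (B.adjugate.mulVec x)‖ = ‖toE2 (B.transpose.mulVec (Jv x))‖ := by
  apply norm_eq_of_sq_eq
  rw [norm_sq_two, norm_sq_two]
  simp only [toE2_eq, Matrix.adjugate_fin_two, mulVec_apply0, mulVec_apply1,
    Matrix.transpose_apply, Jv_apply0, Jv_apply1, Matrix.cons_val', Matrix.cons_val_zero,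
    Matrix.cons_val_one, Matrix.head_cons, Matrix.empty_val', Matrix.cons_val_fin_one,
    Matrix.head_fin_const]
  rw [show !![B 1 1, -B 0 1; -B 1 0, B 0 0] 0 0 = B 1 1 from rfl,
    show !![B 1 1, -B 0 1; -B 1 0, B 0 0] 0 1 = -B 0 1 from rfl,
    show !![B 1 1, -B 0 1; -B 1 0, B 0 0] 1 0 = -B 1 0 from rfl,
    show !![B 1 1, -B 0 1; -B 1 0, B 0 0] 1 1 = B 0 0 from rfl]
  ring

lemma alpha1_adjugate (B : Matrix (Fin 2) (Fin 2) ℝ) : alpha1 B.adjugate = alpha1 B := by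
  have key : ∀ M : Matrix (Fin 2) (Fin 2) ℝ, alpha1 M.adjugate ≤ alpha1 M := by
    intro M
    apply alpha1_le_of_bound (alpha1_nonneg M)
    intro x
    rw [adjugate_mulVec_norm]
    calc ‖toE2 (M.transpose.mulVec (Jv x))‖ ≤ alpha1 M.transpose * ‖Jv x‖ :=
          norm_mulVec_le M.transpose (Jv x)
      _ = alpha1 M * ‖x‖ := by rw [alpha1_transpose, norm_Jv]
  refine le_antisymm (key B) ?_
  have h2 := key B.adjugate
  have h3 : B.adjugate.adjugate = B := by
    rw [Matrix.adjugate_fin_two, Matrix.adjugate_fin_two]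
    ext i j
    fin_cases i <;> fin_cases j <;> simp
  rwa [h3] at h2

/-- The unit coordinate vector. -/
def ee0 : E2 := toE2 ![1, 0]

lemma norm_ee0 : ‖ee0‖ = 1 := by
  have h : ‖ee0‖ ^ 2 = 1 := by
    rw [norm_sq_two]
    show (1:ℝ) ^ 2 + (0:ℝ) ^ 2 = 1
    norm_num
  nlinarith [norm_nonneg ee0]

lemma det_le_alpha1_sq (B : Matrix (Fin 2) (Fin 2) ℝ) : |B.det| ≤ alpha1 B ^ 2 := by
  have h1 : B * B.adjugate = B.det • (1 : Matrix (Fin 2) (Fin 2) ℝ) := Matrix.mul_adjugate B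
  have h2 : ‖toE2 ((B * B.adjugate).mulVec ee0)‖ = |B.det| := by
    rw [h1, norm_smul_mulVec, norm_ee0, mul_one]
  have h3 : toE2 ((B * B.adjugate).mulVec ee0)
      = toE2 (B.mulVec (toE2 (B.adjugate.mulVec ee0))) := by
    rw [toE2_eq (B.adjugate.mulVec ee0), Matrix.mulVec_mulVec]
  have h4 := norm_mulVec_le B (toE2 (B.adjugate.mulVec ee0))
  have h5 := norm_mulVec_le B.adjugate ee0
  rw [norm_ee0, mul_one] at h5
  rw [alpha1_adjugate] at h5
  calc |B.det| = ‖toE2 (B.mulVec (toE2 (B.adjugate.mulVec ee0)))‖ := by rw [← h3, h2]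
    _ ≤ alpha1 B * ‖toE2 (B.adjugate.mulVec ee0)‖ := h4
    _ ≤ alpha1 B * alpha1 B := by nlinarith [alpha1_nonneg B]
    _ = alpha1 B ^ 2 := by ring

lemma alpha1_pos {B : Matrix (Fin 2) (Fin 2) ℝ} (h : B.det ≠ 0) : 0 < alpha1 B := by
  have h1 : 0 < |B.det| := abs_pos.mpr h
  have h2 := det_le_alpha1_sq B
  nlinarith [alpha1_nonneg B]

/-- Lower bound: `|det B| ⬝ ‖x‖ ≤ α₁(B) ⬝ ‖Bx‖`. -/
lemma det_norm_le (B : Matrix (Fin 2) (Fin 2) ℝ) (x : E2) :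
    |B.det| * ‖x‖ ≤ alpha1 B * ‖toE2 (B.mulVec x)‖ := by
  have h1 : B.adjugate * B = B.det • (1 : Matrix (Fin 2) (Fin 2) ℝ) := Matrix.adjugate_mul B
  have h2 : |B.det| * ‖x‖ = ‖toE2 ((B.adjugate * B).mulVec x)‖ := by
    rw [h1, norm_smul_mulVec]
  have h3 : toE2 ((B.adjugate * B).mulVec x) = toE2 (B.adjugate.mulVec (B.mulVec x)) := by
    rw [Matrix.mulVec_mulVec]
  have h4 := norm_mulVec_le B.adjugate (toE2 (B.mulVec x))
  rw [alpha1_adjugate] at h4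
  rw [h2, h3]
  exact h4

lemma alpha2_nonneg (B : Matrix (Fin 2) (Fin 2) ℝ) : 0 ≤ alpha2 B :=
  div_nonneg (abs_nonneg _) (alpha1_nonneg _)

lemma alpha2_pos {B : Matrix (Fin 2) (Fin 2) ℝ} (h : B.det ≠ 0) : 0 < alpha2 B := by
  unfold alpha2
  exact div_pos (abs_pos.mpr h) (alpha1_pos h)

lemma alpha1_mul_alpha2 {B : Matrix (Fin 2) (Fin 2) ℝ} (h : B.det ≠ 0) :
    alpha1 B * alpha2 B = |B.det| := by
  unfold alpha2
  field_simp [(alpha1_pos h).ne']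

lemma alpha2_le_alpha1 (B : Matrix (Fin 2) (Fin 2) ℝ) : alpha2 B ≤ alpha1 B := by
  rcases eq_or_lt_of_le (alpha1_nonneg B) with h0 | h0
  · unfold alpha2; rw [← h0]; simp
  · unfold alpha2
    rw [div_le_iff₀ h0]
    have := det_le_alpha1_sq B
    nlinarith

/-- Lower bound: `α₂(B) ⬝ ‖x‖ ≤ ‖Bx‖`. -/
lemma alpha2_norm_le {B : Matrix (Fin 2) (Fin 2) ℝ} (h : B.det ≠ 0) (x : E2) :
    alpha2 B * ‖x‖ ≤ ‖toE2 (B.mulVec x)‖ := by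
  have h1 := det_norm_le B x
  have h2 := alpha1_pos h
  unfold alpha2
  rw [div_mul_eq_mul_div, div_le_iff₀ h2]
  nlinarith

lemma alpha1_smul_le (c : ℝ) (P : Matrix (Fin 2) (Fin 2) ℝ) :
    alpha1 (c • P) ≤ |c| * alpha1 P := by
  apply alpha1_le_of_bound (mul_nonneg (abs_nonneg c) (alpha1_nonneg P))
  intro x
  have h : (c • P).mulVec x = c • (P.mulVec x) := Matrix.smul_mulVec c P x
  show ‖toE2 ((c • P).mulVec x)‖ ≤ _
  rw [h]
  show ‖c • (toE2 (P.mulVec x))‖ ≤ _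
  rw [norm_smul, Real.norm_eq_abs, mul_assoc]
  nlinarith [norm_mulVec_le P x, abs_nonneg c]

lemma alpha1_smul_left (c : ℝ) (P : Matrix (Fin 2) (Fin 2) ℝ) :
    alpha1 (c • P) = |c| * alpha1 P := by
  refine le_antisymm (alpha1_smul_le c P) ?_
  rcases eq_or_ne c 0 with hc | hc
  · simp [hc, alpha1_nonneg]
  have h1 : P = c⁻¹ • (c • P) := by
    rw [smul_smul, inv_mul_cancel₀ hc, one_smul]
  have h2 : alpha1 P ≤ |c⁻¹| * alpha1 (c • P) := by
    conv_lhs => rw [h1]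
    exact alpha1_smul_le c⁻¹ (c • P)
  rw [abs_inv] at h2
  have hcp : 0 < |c| := abs_pos.mpr hc
  rw [inv_mul_eq_div, le_div_iff₀ hcp] at h2
  linarith [h2]

/-- `α₂(PB) ≤ α₂(P) α₁(B)`. -/
lemma alpha2_mul_le_right {P B : Matrix (Fin 2) (Fin 2) ℝ}
    (hP : P.det ≠ 0) (hB : B.det ≠ 0) :
    alpha2 (P * B) ≤ alpha2 P * alpha1 B := by
  have hPB : (P * B).det ≠ 0 := by
    rw [Matrix.det_mul]; exact mul_ne_zero hP hB
  -- key : |det B| * α₁(P) ≤ α₁(P*B) * α₁(B)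
  have key : |B.det| * alpha1 P ≤ alpha1 (P * B) * alpha1 B := by
    have h1 : (P * B) * B.adjugate = B.det • P := by
      rw [Matrix.mul_assoc, Matrix.mul_adjugate, mul_smul_comm, mul_one]
    have h2 : alpha1 (B.det • P) = |B.det| * alpha1 P := alpha1_smul_left B.det P
    calc |B.det| * alpha1 P = alpha1 ((P * B) * B.adjugate) := by rw [h1, h2]
      _ ≤ alpha1 (P * B) * alpha1 B.adjugate := alpha1_mul_le _ _
      _ = alpha1 (P * B) * alpha1 B := by rw [alpha1_adjugate]
  have hp1 := alpha1_pos hP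
  have hpb1 := alpha1_pos hPB
  have hdet : alpha1 P * alpha2 P = |P.det| := alpha1_mul_alpha2 hP
  have h2 : alpha2 (P * B) = |P.det| * |B.det| / alpha1 (P * B) := by
    unfold alpha2; rw [Matrix.det_mul, abs_mul]
  rw [h2, div_le_iff₀ hpb1]
  have h2P := alpha2_nonneg P
  have hmm := mul_le_mul_of_nonneg_left key h2P
  have heq : |P.det| * |B.det| = alpha2 P * (|B.det| * alpha1 P) := by
    rw [← hdet]; ring
  rw [heq]
  calc alpha2 P * (|B.det| * alpha1 P) ≤ alpha2 P * (alpha1 (P * B) * alpha1 B) := hmm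
    _ = alpha2 P * alpha1 B * alpha1 (P * B) := by ring

/-- `α₂(PB) ≤ α₁(P) α₂(B)`. -/
lemma alpha2_mul_le_left {P B : Matrix (Fin 2) (Fin 2) ℝ}
    (hP : P.det ≠ 0) (hB : B.det ≠ 0) :
    alpha2 (P * B) ≤ alpha1 P * alpha2 B := by
  have hPB : (P * B).det ≠ 0 := by
    rw [Matrix.det_mul]; exact mul_ne_zero hP hB
  have key : |P.det| * alpha1 B ≤ alpha1 (P * B) * alpha1 P := by
    have h1 : P.adjugate * (P * B) = P.det • B := by
      rw [← Matrix.mul_assoc, Matrix.adjugate_mul, smul_mul_assoc, one_mul]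
    calc |P.det| * alpha1 B = alpha1 (P.det • B) := (alpha1_smul_left P.det B).symm
      _ = alpha1 (P.adjugate * (P * B)) := by rw [h1]
      _ ≤ alpha1 P.adjugate * alpha1 (P * B) := alpha1_mul_le _ _
      _ = alpha1 (P * B) * alpha1 P := by rw [alpha1_adjugate]; ring
  have hb1 := alpha1_pos hB
  have hpb1 := alpha1_pos hPB
  have hdet : alpha1 B * alpha2 B = |B.det| := alpha1_mul_alpha2 hB
  have h2 : alpha2 (P * B) = |P.det| * |B.det| / alpha1 (P * B) := by
    unfold alpha2; rw [Matrix.det_mul, abs_mul]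
  rw [h2, div_le_iff₀ hpb1]
  have h2B := alpha2_nonneg B
  have hmm := mul_le_mul_of_nonneg_left key h2B
  have heq : |P.det| * |B.det| = alpha2 B * (|P.det| * alpha1 B) := by
    rw [← hdet]; ring
  rw [heq]
  calc alpha2 B * (|P.det| * alpha1 B) ≤ alpha2 B * (alpha1 (P * B) * alpha1 P) := hmm
    _ = alpha1 P * alpha2 B * alpha1 (P * B) := by ring

end SA7
namespace SA7

variable {N : ℕ}

lemma listProd_nil (A : Fin N → Matrix (Fin 2) (Fin 2) ℝ) : listProd A [] = 1 := rfl

lemma listProd_cons (A : Fin N → Matrix (Fin 2) (Fin 2) ℝ) (i : Fin N) (w : List (Fin N)) :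
    listProd A (i :: w) = A i * listProd A w := by
  unfold listProd
  rw [List.map_cons, List.prod_cons]

lemma listProd_append (A : Fin N → Matrix (Fin 2) (Fin 2) ℝ) (u v : List (Fin N)) :
    listProd A (u ++ v) = listProd A u * listProd A v := by
  unfold listProd
  rw [List.map_append, List.prod_append]

lemma prodRev_zero (A : Fin N → Matrix (Fin 2) (Fin 2) ℝ) (y : ℕ → Fin N) :
    prodRev A y 0 = 1 := rfl

lemma prodRev_succ (A : Fin N → Matrix (Fin 2) (Fin 2) ℝ) (y : ℕ → Fin N) (n : ℕ) :
    prodRev A y (n + 1) = A (y n) * prodRev A y n := by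
  unfold prodRev
  rw [List.range_succ, List.reverse_append]
  simp only [List.reverse_cons, List.reverse_nil, List.nil_append, List.cons_append,
    List.map_cons]
  exact listProd_cons A (y n) _

lemma shift_iterate_apply (y : ℕ → Fin N) (n k : ℕ) : (shift^[n] y) k = y (k + n) := by
  induction n generalizing y with
  | zero => rfl
  | succ n ih =>
    rw [Function.iterate_succ_apply]
    rw [ih (shift y)]
    rfl

lemma prodRev_add (A : Fin N → Matrix (Fin 2) (Fin 2) ℝ) (y : ℕ → Fin N) (n m : ℕ) :
    prodRev A y (n + m) = prodRev A (shift^[n] y) m * prodRev A y n := by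
  induction m with
  | zero =>
    rw [prodRev_zero, one_mul]
    rfl
  | succ m ih =>
    have h1 : n + (m + 1) = (n + m) + 1 := by omega
    rw [h1, prodRev_succ, ih]
    rw [prodRev_succ A (shift^[n] y) m]
    have harg : (shift^[n] y) m = y (n + m) := by
      rw [shift_iterate_apply]
      congr 1
      omega
    rw [harg, Matrix.mul_assoc]

lemma det_prodRev_ne {A : Fin N → Matrix (Fin 2) (Fin 2) ℝ}
    (hA : ∀ i, (A i).det ≠ 0) (y : ℕ → Fin N) (n : ℕ) : (prodRev A y n).det ≠ 0 := by
  induction n with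
  | zero => rw [prodRev_zero]; simp
  | succ n ih =>
    rw [prodRev_succ, Matrix.det_mul]
    exact mul_ne_zero (hA (y n)) ih

lemma det_listProd_ne {A : Fin N → Matrix (Fin 2) (Fin 2) ℝ}
    (hA : ∀ i, (A i).det ≠ 0) (w : List (Fin N)) : (listProd A w).det ≠ 0 := by
  induction w with
  | nil => rw [listProd_nil]; simp
  | cons i w ih =>
    rw [listProd_cons, Matrix.det_mul]
    exact mul_ne_zero (hA i) ih

lemma toEuclideanLin_apply (B : Matrix (Fin 2) (Fin 2) ℝ) (x : E2) :
    Matrix.toEuclideanLin B x = toE2 (B.mulVec x) := rfl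

lemma toEuclideanLin_mul (M P : Matrix (Fin 2) (Fin 2) ℝ) :
    Matrix.toEuclideanLin (M * P)
      = (Matrix.toEuclideanLin M).comp (Matrix.toEuclideanLin P) := by
  apply LinearMap.ext; intro x
  show toE2 ((M * P).mulVec x) = toE2 (M.mulVec (P.mulVec x))
  rw [Matrix.mulVec_mulVec]

lemma mulVec_injective {B : Matrix (Fin 2) (Fin 2) ℝ} (hB : B.det ≠ 0)
    {a b : Fin 2 → ℝ} (h : B.mulVec a = B.mulVec b) : a = b := by
  have h1 : B.adjugate.mulVec (B.mulVec a) = B.adjugate.mulVec (B.mulVec b) := by rw [h]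
  rw [Matrix.mulVec_mulVec, Matrix.mulVec_mulVec, Matrix.adjugate_mul] at h1
  have h2 : ∀ v : Fin 2 → ℝ, (B.det • (1:Matrix (Fin 2) (Fin 2) ℝ)).mulVec v = B.det • v := by
    intro v
    rw [Matrix.smul_mulVec, Matrix.one_mulVec]
  rw [h2, h2] at h1
  exact smul_right_injective _ hB h1

/-- Iterated equivariance of the strongly stable directions. -/
lemma ess_equivariant {A : Fin N → Matrix (Fin 2) (Fin 2) ℝ}
    {ess : (ℕ → Fin N) → Submodule ℝ E2}
    (heq : ∀ x, Submodule.map (Matrix.toEuclideanLin (A (x 0))) (ess x) = ess (shift x))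
    (y : ℕ → Fin N) (n : ℕ) :
    Submodule.map (Matrix.toEuclideanLin (prodRev A y n)) (ess y) = ess (shift^[n] y) := by
  induction n with
  | zero =>
    rw [prodRev_zero]
    have h1 : Matrix.toEuclideanLin (1 : Matrix (Fin 2) (Fin 2) ℝ) = LinearMap.id := by
      apply LinearMap.ext; intro x
      show toE2 ((1 : Matrix (Fin 2) (Fin 2) ℝ).mulVec x) = x
      rw [Matrix.one_mulVec]; rfl
    rw [h1, Submodule.map_id]
    rfl
  | succ n ih =>
    rw [prodRev_succ, toEuclideanLin_mul, Submodule.map_comp, ih]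
    have h2 := heq (shift^[n] y)
    rw [shift_iterate_apply, Nat.zero_add] at h2
    rw [Function.iterate_succ_apply']
    exact h2

end SA7
namespace SA7

section Core

variable {N : ℕ} (A : Fin N → Matrix (Fin 2) (Fin 2) ℝ) (e : (ℕ → Fin N) → E2)

/-- Image of the perpendicular direction. -/
noncomputable def VV (y : ℕ → Fin N) (n : ℕ) : E2 :=
  toE2 ((prodRev A y n).mulVec (Jv (e y)))

/-- Contraction along the stable direction. -/
noncomputable def aN (y : ℕ → Fin N) (n : ℕ) : ℝ :=
  ‖toE2 ((prodRev A y n).mulVec (e y))‖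

/-- Tangential component of `VV`. -/
noncomputable def cN (y : ℕ → Fin N) (n : ℕ) : ℝ :=
  |⟪VV A e y n, e (shift^[n] y)⟫|

/-- Normal component of `VV`. -/
noncomputable def hN (y : ℕ → Fin N) (n : ℕ) : ℝ :=
  |om (e (shift^[n] y)) (VV A e y n)|

/-- The slope. -/
noncomputable def tN (y : ℕ → Fin N) (n : ℕ) : ℝ := cN A e y n / hN A e y n

variable {A} {e} {C δ : ℝ}
variable (hAdet : ∀ i, (A i).det ≠ 0)
variable (hunit : ∀ z, ‖e z‖ = 1)
variable (hpar : ∀ z, ∃ s : ℝ, toE2 ((A (z 0)).mulVec (e z)) = s • e (shift z))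
variable (hC : 0 < C)
variable (hcontr : ∀ (z : ℕ → Fin N) (n : ℕ),
  ‖toE2 ((prodRev A z n).mulVec (e z))‖ ≤ C * Real.exp (-δ * n) * alpha1 (prodRev A z n))

include hunit hpar in
/-- Iterated alignment: products map `e y` to a multiple of `e (σⁿ y)`. -/
lemma parN (y : ℕ → Fin N) (n : ℕ) :
    ∃ s : ℝ, toE2 ((prodRev A y n).mulVec (e y)) = s • e (shift^[n] y) := by
  induction n with
  | zero =>
    refine ⟨1, ?_⟩
    rw [prodRev_zero, Matrix.one_mulVec, one_smul]
    rfl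
  | succ n ih =>
    obtain ⟨s, hs⟩ := ih
    obtain ⟨s', hs'⟩ := hpar (shift^[n] y)
    refine ⟨s * s', ?_⟩
    rw [prodRev_succ, ← Matrix.mulVec_mulVec]
    have h1 : (prodRev A y n).mulVec (e y) = s • e (shift^[n] y) := congrArg WithLp.ofLp hs
    rw [h1, Matrix.mulVec_smul]
    have h2 : (A (y n)).mulVec (e (shift^[n] y)) = s' • e (shift (shift^[n] y)) := by
      have h3 := hs'
      rw [shift_iterate_apply, Nat.zero_add] at h3
      exact congrArg WithLp.ofLp h3
    rw [h2]
    rw [Function.iterate_succ_apply']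
    show (s • s' • e (shift (shift^[n] y))) = _
    rw [smul_smul]

include hunit in
lemma aN_eq_abs {y : ℕ → Fin N} {n : ℕ} {s : ℝ}
    (hs : toE2 ((prodRev A y n).mulVec (e y)) = s • e (shift^[n] y)) :
    aN A e y n = |s| := by
  unfold aN
  rw [hs, norm_smul, Real.norm_eq_abs, hunit, mul_one]

include hAdet hunit hpar in
/-- The exact determinant identity `aN ⬝ hN = |det|`. -/
lemma aN_mul_hN (y : ℕ → Fin N) (n : ℕ) :
    aN A e y n * hN A e y n = |(prodRev A y n).det| := by
  obtain ⟨s, hs⟩ := parN hunit hpar y n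
  have hdetom : om (toE2 ((prodRev A y n).mulVec (e y))) (VV A e y n)
      = (prodRev A y n).det := by
    unfold VV
    rw [om_mulVec]
    rw [om_Jv_self, hunit, one_pow, mul_one]
  rw [hs, om_smul_left] at hdetom
  have h2 : |s * om (e (shift^[n] y)) (VV A e y n)| = |(prodRev A y n).det| := by
    rw [hdetom]
  rw [abs_mul] at h2
  rw [aN_eq_abs hunit hs]
  exact h2

include hAdet hunit hpar in
lemma hN_pos (y : ℕ → Fin N) (n : ℕ) : 0 < hN A e y n := by
  have h1 := aN_mul_hN hAdet hunit hpar y n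
  have h2 : 0 < |(prodRev A y n).det| := abs_pos.mpr (det_prodRev_ne hAdet y n)
  have h3 : 0 ≤ hN A e y n := abs_nonneg _
  rcases eq_or_lt_of_le h3 with h4 | h4
  · rw [← h4, mul_zero] at h1; linarith
  · exact h4

include hAdet hunit hpar in
lemma aN_pos (y : ℕ → Fin N) (n : ℕ) : 0 < aN A e y n := by
  have h1 := aN_mul_hN hAdet hunit hpar y n
  have h2 : 0 < |(prodRev A y n).det| := abs_pos.mpr (det_prodRev_ne hAdet y n)
  have h3 : 0 ≤ aN A e y n := norm_nonneg _
  rcases eq_or_lt_of_le h3 with h4 | h4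
  · rw [← h4, zero_mul] at h1; linarith
  · exact h4

include hunit in
lemma normVV_le (y : ℕ → Fin N) (n : ℕ) :
    ‖VV A e y n‖ ≤ cN A e y n + hN A e y n := by
  have hp := parseval (hunit (shift^[n] y)) (VV A e y n)
  have h1 : 0 ≤ cN A e y n := abs_nonneg _
  have h2 : 0 ≤ hN A e y n := abs_nonneg _
  have h3 : ‖VV A e y n‖ ^ 2 = cN A e y n ^ 2 + hN A e y n ^ 2 := by
    rw [hp]
    unfold cN hN
    rw [sq_abs, sq_abs]
  nlinarith [norm_nonneg (VV A e y n)]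

include hC hunit hcontr in
/-- Lower bound for the expansion of the perpendicular direction. -/
lemma normVV_ge (z : ℕ → Fin N) (m : ℕ) :
    (1 - C * Real.exp (-δ * m)) * alpha1 (prodRev A z m) ≤ ‖VV A e z m‖ := by
  set P := prodRev A z m with hP
  have key : alpha1 P ≤ C * Real.exp (-δ * m) * alpha1 P + ‖VV A e z m‖ := by
    apply alpha1_le_of_bound
    · exact add_nonneg (mul_nonneg (mul_nonneg hC.le (Real.exp_pos _).le)
        (alpha1_nonneg P)) (norm_nonneg _)
    · intro x
      have hexp := expansion (hunit z) x
      have h1 : P.mulVec x = ⟪x, e z⟫ • (P.mulVec (e z)) + om (e z) x • (P.mulVec (Jv (e z))) := by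
        conv_lhs => rw [show x = (⟪x, e z⟫ • e z + om (e z) x • Jv (e z) : E2) from hexp]
        rw [WithLp.ofLp_add, WithLp.ofLp_smul, WithLp.ofLp_smul, Matrix.mulVec_add, Matrix.mulVec_smul, Matrix.mulVec_smul]
      calc ‖toE2 (P.mulVec x)‖
          = ‖⟪x, e z⟫ • toE2 (P.mulVec (e z)) + om (e z) x • VV A e z m‖ := by
            rw [h1]; rfl
        _ ≤ ‖⟪x, e z⟫ • toE2 (P.mulVec (e z))‖ + ‖om (e z) x • VV A e z m‖ := norm_add_le _ _
        _ = |⟪x, e z⟫| * ‖toE2 (P.mulVec (e z))‖ + |om (e z) x| * ‖VV A e z m‖ := by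
            rw [norm_smul, norm_smul, Real.norm_eq_abs, Real.norm_eq_abs]
        _ ≤ ‖x‖ * (C * Real.exp (-δ * m) * alpha1 P) + ‖x‖ * ‖VV A e z m‖ := by
            have hc1 : |⟪x, e z⟫| ≤ ‖x‖ := by
              have := abs_real_inner_le_norm x (e z)
              rwa [hunit z, mul_one] at this
            have hc2 : |om (e z) x| ≤ ‖x‖ := by
              have := abs_om_le (e z) x
              rwa [hunit z, one_mul] at this
            have hc3 := hcontr z m
            have hc4 : (0:ℝ) ≤ ‖toE2 (P.mulVec (e z))‖ := norm_nonneg _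
            have hc5 : (0:ℝ) ≤ ‖VV A e z m‖ := norm_nonneg _
            have hc6 : (0:ℝ) ≤ |⟪x, e z⟫| := abs_nonneg _
            have hc7 : (0:ℝ) ≤ |om (e z) x| := abs_nonneg _
            nlinarith [norm_nonneg x]
        _ = (C * Real.exp (-δ * m) * alpha1 P + ‖VV A e z m‖) * ‖x‖ := by ring
  linarith

end Core

end SA7
namespace SA7

section Core2

variable {N : ℕ} {A : Fin N → Matrix (Fin 2) (Fin 2) ℝ} {e : (ℕ → Fin N) → E2} {C δ : ℝ}
variable (hAdet : ∀ i, (A i).det ≠ 0)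
variable (hunit : ∀ z, ‖e z‖ = 1)
variable (hpar : ∀ z, ∃ s : ℝ, toE2 ((A (z 0)).mulVec (e z)) = s • e (shift z))
variable (hC : 0 < C)
variable (hcontr : ∀ (z : ℕ → Fin N) (n : ℕ),
  ‖toE2 ((prodRev A z n).mulVec (e z))‖ ≤ C * Real.exp (-δ * n) * alpha1 (prodRev A z n))

/-- Purely numeric core of the slope recursion. -/
lemma slope_calc {ε c0 h0 c1 h1 a D α cnew : ℝ}
    (hε0 : 0 < ε) (hεm : ε < 1) (hc0 : 0 ≤ c0) (hh0 : 0 < h0) (hc1 : 0 ≤ c1) (hh1 : 0 < h1)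
    (ha : 0 < a) (hD : 0 < D) (hα : 0 < α) (hcnew : 0 ≤ cnew)
    (hcc : cnew ≤ c0 * a + h0 * α) (hab : a ≤ ε * α) (hahm : a * h1 = D)
    (hVge : (1 - ε) * α ≤ c1 + h1) :
    cnew / (h0 * D / a) ≤ ((1 + c1 / h1) / (1 - ε)) * (ε * (c0 / h0) + 1) := by
  have hN'_pos : 0 < h0 * D / a := by positivity
  have h1ε : 0 < 1 - ε := by linarith
  have hden : 0 < a * h1 * (1 - ε) := by positivity
  rw [div_le_iff₀ hN'_pos]
  have hRHS : ((1 + c1 / h1) / (1 - ε)) * (ε * (c0 / h0) + 1) * (h0 * D / a)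
      = ((h1 + c1) * (ε * c0 + h0) * D) / (a * h1 * (1 - ε)) := by
    field_simp [hh0.ne', hh1.ne', ha.ne', h1ε.ne']
  rw [hRHS]
  rw [le_div_iff₀ hden]
  calc cnew * (a * h1 * (1 - ε))
      ≤ (c0 * a + h0 * α) * (a * h1 * (1 - ε)) := by
        apply mul_le_mul_of_nonneg_right hcc hden.le
    _ = c0 * a * (1 - ε) * (a * h1) + h0 * ((1 - ε) * α) * (a * h1) := by ring
    _ = c0 * a * (1 - ε) * D + h0 * ((1 - ε) * α) * D := by rw [hahm]
    _ ≤ c0 * (ε * α) * (1 - ε) * D + h0 * (c1 + h1) * D := by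
        have k1 : c0 * a * (1 - ε) * D ≤ c0 * (ε * α) * (1 - ε) * D := by
          apply mul_le_mul_of_nonneg_right _ hD.le
          apply mul_le_mul_of_nonneg_right _ (by linarith)
          exact mul_le_mul_of_nonneg_left hab hc0
        have k2 : h0 * ((1 - ε) * α) * D ≤ h0 * (c1 + h1) * D := by
          apply mul_le_mul_of_nonneg_right _ hD.le
          exact mul_le_mul_of_nonneg_left hVge hh0.le
        linarith
    _ ≤ c0 * (ε * (c1 + h1)) * D + h0 * (c1 + h1) * D := by
        have k3 : α * (1 - ε) ≤ c1 + h1 := by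
          calc α * (1 - ε) = (1 - ε) * α := by ring
            _ ≤ c1 + h1 := hVge
        have k4 : c0 * (ε * α) * (1 - ε) ≤ c0 * (ε * (c1 + h1)) := by
          calc c0 * (ε * α) * (1 - ε) = (c0 * ε) * (α * (1 - ε)) := by ring
            _ ≤ (c0 * ε) * (c1 + h1) := by
              apply mul_le_mul_of_nonneg_left k3 (by positivity)
            _ = c0 * (ε * (c1 + h1)) := by ring
        have k5 := mul_le_mul_of_nonneg_right k4 hD.le
        linarith
    _ = (h1 + c1) * (ε * c0 + h0) * D := by ring

include hAdet hunit hpar hC hcontr in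
lemma tN_nonneg (y : ℕ → Fin N) (n : ℕ) : 0 ≤ tN A e y n :=
  div_nonneg (abs_nonneg _) (abs_nonneg _)

include hAdet hunit hpar hC hcontr in
/-- The key recursion for the slopes. -/
lemma tN_rec (y : ℕ → Fin N) (n m : ℕ) (hεm : C * Real.exp (-δ * m) < 1) :
    tN A e y (n + m) ≤ ((1 + tN A e (shift^[n] y) m) / (1 - C * Real.exp (-δ * m)))
      * ((C * Real.exp (-δ * m)) * tN A e y n + 1) := by
  set z := shift^[n] y with hz
  set ε := C * Real.exp (-δ * m) with hε
  have hε0 : 0 < ε := by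
    rw [hε]; exact mul_pos hC (Real.exp_pos _)
  set B := prodRev A y n with hB
  set P := prodRev A z m with hPdef
  have hPB : prodRev A y (n + m) = P * B := prodRev_add A y n m
  have hshift : shift^[n + m] y = shift^[m] z := by
    rw [hz, Nat.add_comm]
    exact Function.iterate_add_apply shift m n y
  set u2 := e z with hu2
  set u3 := e (shift^[m] z) with hu3
  obtain ⟨s, hs⟩ := parN hunit hpar z m
  have hsabs : aN A e z m = |s| := aN_eq_abs hunit hs
  set a := aN A e z m with ha
  have ha_pos : 0 < a := aN_pos hAdet hunit hpar z m
  have hs_ne : s ≠ 0 := by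
    intro h0
    rw [h0, abs_zero] at hsabs
    exact ha_pos.ne' hsabs
  set V := VV A e y n with hV
  set c0 := cN A e y n with hc0
  set h0 := hN A e y n with hh0
  set c1 := cN A e z m with hc1
  set h1 := hN A e z m with hh1
  have h0_pos : 0 < h0 := hN_pos hAdet hunit hpar y n
  have h1_pos : 0 < h1 := hN_pos hAdet hunit hpar z m
  have hc0_nonneg : 0 ≤ c0 := abs_nonneg _
  have hc1_nonneg : 0 ≤ c1 := abs_nonneg _
  set D := |P.det| with hD
  have hD_pos : 0 < D := abs_pos.mpr (det_prodRev_ne hAdet z m)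
  have hα_pos : 0 < alpha1 P := alpha1_pos (det_prodRev_ne hAdet z m)
  set α := alpha1 P with hα
  -- decomposition of V
  have hexp := expansion (hunit z) V
  -- the new vector
  have hVnew : VV A e y (n + m) = toE2 (P.mulVec V) := by
    unfold VV
    rw [hPB, ← Matrix.mulVec_mulVec]
    rfl
  have hdec : toE2 (P.mulVec V)
      = ⟪V, u2⟫ • (s • u3) + om u2 V • toE2 (P.mulVec (Jv u2)) := by
    conv_lhs => rw [show V = (⟪V, u2⟫ • u2 + om u2 V • Jv u2 : E2) from hexp]
    rw [WithLp.ofLp_add, WithLp.ofLp_smul, WithLp.ofLp_smul, Matrix.mulVec_add, Matrix.mulVec_smul, Matrix.mulVec_smul]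
    show (⟪V, u2⟫ • (toE2 (P.mulVec u2)) + om u2 V • toE2 (P.mulVec (Jv u2)) : E2) = _
    rw [show toE2 (P.mulVec u2) = s • u3 from hs]
  -- the key scalar identity : s * om u3 (P (Jv u2)) = det P
  have hkey : s * om u3 (toE2 (P.mulVec (Jv u2))) = P.det := by
    have h2 : om (toE2 (P.mulVec u2)) (toE2 (P.mulVec (Jv u2))) = P.det * om u2 (Jv u2) :=
      om_mulVec P u2 (Jv u2)
    rw [om_Jv_self, hunit, one_pow, mul_one] at h2
    rw [hs, om_smul_left] at h2
    exact h2
  have hPJ_norm : ‖toE2 (P.mulVec (Jv u2))‖ = ‖VV A e z m‖ := rfl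
  -- new tangential component bound
  have hcc : cN A e y (n + m) ≤ c0 * a + h0 * α := by
    unfold cN
    rw [hshift, hVnew, hdec, ← hu3]
    have hlin : ⟪⟪V, u2⟫ • (s • u3) + om u2 V • toE2 (P.mulVec (Jv u2)), u3⟫
        = ⟪V, u2⟫ * s + om u2 V * ⟪toE2 (P.mulVec (Jv u2)), u3⟫ := by
      rw [inner_add_left, real_inner_smul_left, real_inner_smul_left, real_inner_smul_left]
      rw [real_inner_self_eq_norm_sq, hunit]
      ring
    rw [hlin]
    have hb1 : |⟪toE2 (P.mulVec (Jv u2)), u3⟫| ≤ α := by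
      have hcs := abs_real_inner_le_norm (toE2 (P.mulVec (Jv u2))) u3
      rw [hunit, mul_one] at hcs
      have hb2 : ‖toE2 (P.mulVec (Jv u2))‖ ≤ α * ‖Jv u2‖ := norm_mulVec_le P (Jv u2)
      rw [norm_Jv, hunit, mul_one] at hb2
      linarith
    calc |⟪V, u2⟫ * s + om u2 V * ⟪toE2 (P.mulVec (Jv u2)), u3⟫|
        ≤ |⟪V, u2⟫ * s| + |om u2 V * ⟪toE2 (P.mulVec (Jv u2)), u3⟫| := abs_add_le _ _
      _ = |⟪V, u2⟫| * |s| + |om u2 V| * |⟪toE2 (P.mulVec (Jv u2)), u3⟫| := by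
          rw [abs_mul, abs_mul]
      _ ≤ c0 * a + h0 * α := by
          have e1 : |⟪V, u2⟫| = c0 := rfl
          have e2 : |om u2 V| = h0 := rfl
          rw [e1, e2, hsabs]
          have h3 : 0 ≤ h0 := h0_pos.le
          nlinarith [abs_nonneg s, hc0_nonneg, hb1, abs_nonneg (om u2 V)]
  -- new normal component: exact value
  have hhh : hN A e y (n + m) = h0 * D / a := by
    unfold hN
    rw [hshift, hVnew, hdec, ← hu3]
    have hlin : om u3 (⟪V, u2⟫ • (s • u3) + om u2 V • toE2 (P.mulVec (Jv u2)))
        = ⟪V, u2⟫ * (s * om u3 u3) + om u2 V * om u3 (toE2 (P.mulVec (Jv u2))) := by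
      rw [om_add_right, om_smul_right, om_smul_right, om_smul_right]
    rw [hlin, om_self, mul_zero, mul_zero, zero_add]
    rw [abs_mul]
    have e2 : |om u2 V| = h0 := rfl
    rw [e2]
    have h4 : |om u3 (toE2 (P.mulVec (Jv u2)))| = D / a := by
      have h5 : |s| * |om u3 (toE2 (P.mulVec (Jv u2)))| = D := by
        rw [← abs_mul, hkey]
      rw [hsabs, eq_div_iff (abs_ne_zero.mpr hs_ne), mul_comm]
      exact h5
    rw [h4, mul_div_assoc]
  -- bounds relating a, α
  have hab : a ≤ ε * α := by
    have := hcontr z m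
    rw [← hPdef, ← hα, ← hε] at this
    exact this
  have hahm : a * h1 = D := aN_mul_hN hAdet hunit hpar z m
  have hVge : (1 - ε) * α ≤ c1 + h1 := by
    have h6 := normVV_ge hunit hC hcontr z m
    have h7 := normVV_le (A := A) hunit z m
    rw [← hPdef, ← hα, ← hε] at h6
    rw [← hc1, ← hh1] at h7
    linarith
  -- final assembly
  have htz : tN A e z m = c1 / h1 := rfl
  have ht0 : tN A e y n = c0 / h0 := rfl
  set cnew := cN A e y (n + m) with hcnew
  have htnew : tN A e y (n + m) = cnew / (h0 * D / a) := by
    rw [show tN A e y (n + m) = cN A e y (n + m) / hN A e y (n + m) from rfl, hhh]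
  have hcnew_nonneg : 0 ≤ cnew := abs_nonneg _
  rw [htnew, htz, ht0]
  exact slope_calc hε0 hεm hc0_nonneg h0_pos hc1_nonneg h1_pos ha_pos hD_pos hα_pos
    hcnew_nonneg hcc hab hahm hVge

end Core2

end SA7
namespace SA7

section Core3

variable {N : ℕ} {A : Fin N → Matrix (Fin 2) (Fin 2) ℝ} {e : (ℕ → Fin N) → E2} {C δ Q : ℝ}
variable (hAdet : ∀ i, (A i).det ≠ 0)
variable (hunit : ∀ z, ‖e z‖ = 1)
variable (hpar : ∀ z, ∃ s : ℝ, toE2 ((A (z 0)).mulVec (e z)) = s • e (shift z))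
variable (hC : 0 < C) (hδ : 0 < δ)
variable (hcontr : ∀ (z : ℕ → Fin N) (n : ℕ),
  ‖toE2 ((prodRev A z n).mulVec (e z))‖ ≤ C * Real.exp (-δ * n) * alpha1 (prodRev A z n))
variable (hQ1 : 1 ≤ Q)
variable (hQ : ∀ (y : ℕ → Fin N) (m : ℕ),
  alpha1 (prodRev A y m) ^ 2 ≤ Q ^ m * |(prodRev A y m).det|)

include hAdet hunit hpar hC hδ hcontr hQ1 hQ in
/-- The crude a priori bound on the slopes. -/
lemma tN_crude (y : ℕ → Fin N) (m : ℕ) :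
    tN A e y m ≤ C * (Q ^ m * Real.exp (-δ * m)) := by
  set α := alpha1 (prodRev A y m) with hα
  set D := |(prodRev A y m).det| with hD
  have hα_pos : 0 < α := alpha1_pos (det_prodRev_ne hAdet y m)
  have hD_pos : 0 < D := abs_pos.mpr (det_prodRev_ne hAdet y m)
  have haN_pos : 0 < aN A e y m := aN_pos hAdet hunit hpar y m
  have hhN_pos : 0 < hN A e y m := hN_pos hAdet hunit hpar y m
  have h4 : aN A e y m * hN A e y m = D := aN_mul_hN hAdet hunit hpar y m
  have h1 : cN A e y m ≤ α := by
    have hcs := abs_real_inner_le_norm (VV A e y m) (e (shift^[m] y))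
    rw [hunit, mul_one] at hcs
    have hvv : ‖VV A e y m‖ ≤ α * ‖Jv (e y)‖ := norm_mulVec_le _ _
    rw [norm_Jv, hunit, mul_one] at hvv
    exact le_trans hcs hvv
  have h3 : aN A e y m ≤ C * Real.exp (-δ * m) * α := hcontr y m
  have h2 : α * α ≤ Q ^ m * D := by
    have := hQ y m
    nlinarith
  rw [show tN A e y m = cN A e y m / hN A e y m from rfl, div_le_iff₀ hhN_pos]
  have hchain : cN A e y m * aN A e y m
      ≤ (C * (Q ^ m * Real.exp (-δ * m)) * hN A e y m) * aN A e y m := by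
    calc cN A e y m * aN A e y m
        ≤ α * aN A e y m := mul_le_mul_of_nonneg_right h1 haN_pos.le
      _ ≤ α * (C * Real.exp (-δ * m) * α) := mul_le_mul_of_nonneg_left h3 hα_pos.le
      _ = (C * Real.exp (-δ * m)) * (α * α) := by ring
      _ ≤ (C * Real.exp (-δ * m)) * (Q ^ m * D) := by
          apply mul_le_mul_of_nonneg_left h2
          positivity
      _ = (C * (Q ^ m * Real.exp (-δ * m)) * hN A e y m) * aN A e y m := by
          rw [← h4]; ring
  exact le_of_mul_le_mul_right hchain haN_pos

include hAdet hunit hpar hC hδ hcontr in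
set_option maxHeartbeats 1000000 in
/-- One improvement step for an exponential bound on the slopes. -/
lemma stageA_step {M1 : ℕ} (hM1 : ∀ m : ℕ, M1 ≤ m → C * Real.exp (-δ * m) ≤ 1/2)
    {S : ℝ} (hS0 : 0 ≤ S) (hS : ∀ (y : ℕ → Fin N) (k : ℕ), k ≤ 2 * M1 + 1 → tN A e y k ≤ S)
    {γ Ab : ℝ} (hγ : δ/2 ≤ γ) (hAb : 1 ≤ Ab)
    (hbound : ∀ (y : ℕ → Fin N) (n : ℕ), tN A e y n ≤ Ab * Real.exp (γ * n)) :
    ∀ (y : ℕ → Fin N) (k : ℕ),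
      tN A e y k ≤ (2 * (1 + C * Ab + Ab * Real.exp γ + C * Ab ^ 2) + S)
        * Real.exp (max (γ - δ/2) (δ/2) * k) := by
  intro y k
  set γ' := max (γ - δ/2) (δ/2) with hγ'
  have hγ'_pos : 0 < γ' := lt_of_lt_of_le (by linarith) (le_max_right _ _)
  have hγ_pos : 0 < γ := by linarith
  have hk0 : (0:ℝ) ≤ (k:ℝ) := Nat.cast_nonneg k
  have hE1 : (1:ℝ) ≤ Real.exp (γ' * k) := Real.one_le_exp (by positivity)
  have hA''0 : (0:ℝ) ≤ 2 * (1 + C * Ab + Ab * Real.exp γ + C * Ab ^ 2) := by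
    have := Real.exp_pos γ
    nlinarith
  by_cases hk : k ≤ 2 * M1 + 1
  · have h1 := hS y k hk
    have h2 : (0:ℝ) ≤ (2 * (1 + C * Ab + Ab * Real.exp γ + C * Ab ^ 2) + S) * (Real.exp (γ' * k) - 1) :=
      mul_nonneg (by linarith) (by linarith)
    nlinarith
  · push_neg at hk
    set n := k / 2 with hn
    set m := k - k / 2 with hm
    have hnm : n + m = k := by omega
    have hnle : 2 * n ≤ k := by omega
    have hmge : k ≤ 2 * m := by omega
    have hmle : 2 * m ≤ k + 1 := by omega
    have hM1m : M1 ≤ m := by omega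
    have hεm_le : C * Real.exp (-δ * m) ≤ 1/2 := hM1 m hM1m
    have hεm : C * Real.exp (-δ * m) < 1 := by linarith
    have hnleR : (n:ℝ) * 2 ≤ (k:ℝ) := by exact_mod_cast by omega
    have hmgeR : (k:ℝ) ≤ (m:ℝ) * 2 := by exact_mod_cast by omega
    have hmleR : (m:ℝ) * 2 ≤ (k:ℝ) + 1 := by exact_mod_cast by omega
    have hnmR : (n:ℝ) + (m:ℝ) = (k:ℝ) := by exact_mod_cast hnm
    have hhalf : γ / 2 ≤ γ' := by
      rcases le_total γ δ with hcase | hcase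
      · have := le_max_right (γ - δ/2) (δ/2); linarith
      · have := le_max_left (γ - δ/2) (δ/2); linarith
    have hmid : γ - δ/2 ≤ γ' := le_max_left _ _
    set E := Real.exp (γ' * (k:ℝ)) with hE
    set X := Real.exp (γ * (n:ℝ)) with hX
    set Y := Real.exp (γ * (m:ℝ)) with hY
    set W := Real.exp (-δ * (m:ℝ)) with hW
    have hEpos : 0 < E := Real.exp_pos _
    have hXpos : 0 < X := Real.exp_pos _
    have hYpos : 0 < Y := Real.exp_pos _
    have hWpos : 0 < W := Real.exp_pos _
    have hXW : X * W ≤ E := by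
      rw [hX, hW, hE, ← Real.exp_add]
      apply Real.exp_le_exp.mpr
      rcases le_total γ δ with hcase | hcase
      · have e1 : γ * ((n:ℝ) * 2) ≤ γ * k := mul_le_mul_of_nonneg_left hnleR hγ_pos.le
        have e2 : δ * (k:ℝ) ≤ δ * ((m:ℝ) * 2) := mul_le_mul_of_nonneg_left hmgeR hδ.le
        have e3 : (γ - δ) * (k:ℝ) ≤ 0 := mul_nonpos_of_nonpos_of_nonneg (by linarith) hk0
        have e4 : 0 ≤ γ' * (k:ℝ) := by positivity
        linarith
      · have e1 : γ * ((n:ℝ) * 2) ≤ γ * k := mul_le_mul_of_nonneg_left hnleR hγ_pos.le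
        have e2 : δ * (k:ℝ) ≤ δ * ((m:ℝ) * 2) := mul_le_mul_of_nonneg_left hmgeR hδ.le
        have e3 : (γ - δ/2) * (k:ℝ) ≤ γ' * (k:ℝ) := mul_le_mul_of_nonneg_right hmid hk0
        have e4 : 0 ≤ γ * (k:ℝ) := by positivity
        linarith
    have hYbound : Y ≤ Real.exp γ * E := by
      rw [hY, hE, ← Real.exp_add]
      apply Real.exp_le_exp.mpr
      have e1 : γ * ((m:ℝ) * 2) ≤ γ * ((k:ℝ) + 1) := mul_le_mul_of_nonneg_left hmleR hγ_pos.le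
      have e2 : (γ/2) * (k:ℝ) ≤ γ' * (k:ℝ) := mul_le_mul_of_nonneg_right hhalf hk0
      linarith
    have hXYW : X * Y * W ≤ E := by
      rw [hX, hY, hW, hE, ← Real.exp_add, ← Real.exp_add]
      apply Real.exp_le_exp.mpr
      have e2 : δ * (k:ℝ) ≤ δ * ((m:ℝ) * 2) := mul_le_mul_of_nonneg_left hmgeR hδ.le
      have e3 : (γ - δ/2) * (k:ℝ) ≤ γ' * (k:ℝ) := mul_le_mul_of_nonneg_right hmid hk0
      have e4 : γ * (n:ℝ) + γ * (m:ℝ) = γ * (k:ℝ) := by rw [← hnmR]; ring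
      linarith
    have hrec := tN_rec hAdet hunit hpar hC hcontr y n m hεm
    rw [hnm] at hrec
    set ε := C * W with hεdef
    set t1 := tN A e (shift^[n] y) m with ht1def
    set t0 := tN A e y n with ht0def
    have ht1 : t1 ≤ Ab * Y := hbound _ m
    have ht0 : t0 ≤ Ab * X := hbound y n
    have ht0n : 0 ≤ t0 := tN_nonneg hAdet hunit hpar hC hcontr y n
    have ht1n : 0 ≤ t1 := tN_nonneg hAdet hunit hpar hC hcontr _ m
    have hεpos : 0 < ε := mul_pos hC hWpos
    have hAb0 : (0:ℝ) ≤ Ab := by linarith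
    have hεhalf : ε ≤ 1/2 := by rw [hεdef, hW]; exact hεm_le
    have hfrac : (1 + t1) / (1 - ε) ≤ 2 * (1 + t1) := by
      rw [div_le_iff₀ (by linarith : (0:ℝ) < 1 - ε)]
      have hpr : 0 ≤ (1 + t1) * (1 - 2 * ε) :=
        mul_nonneg (by linarith) (by linarith)
      nlinarith
    have hstep2 : tN A e y k ≤ 2 * (1 + t1) * (ε * t0 + 1) := by
      have hpos2 : 0 ≤ ε * t0 + 1 := by positivity
      calc tN A e y k ≤ (1 + t1) / (1 - ε) * (ε * t0 + 1) := hrec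
        _ ≤ 2 * (1 + t1) * (ε * t0 + 1) := mul_le_mul_of_nonneg_right hfrac hpos2
    have hstep3 : 2 * (1 + t1) * (ε * t0 + 1) ≤ 2 * (1 + Ab * Y) * (C * Ab * (X * W) + 1) := by
      have hb1 : ε * t0 ≤ C * Ab * (X * W) := by
        calc ε * t0 ≤ ε * (Ab * X) := mul_le_mul_of_nonneg_left ht0 hεpos.le
          _ = C * Ab * (X * W) := by rw [hεdef]; ring
      have hf1 : 0 ≤ 1 + t1 := by linarith
      have hf2 : 0 ≤ C * Ab * (X * W) + 1 := by positivity
      apply mul_le_mul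
      · linarith
      · linarith
      · positivity
      · positivity
    have hexpand : 2 * (1 + Ab * Y) * (C * Ab * (X * W) + 1)
        = 2 + 2 * (C * Ab) * (X * W) + 2 * Ab * Y + 2 * (C * Ab ^ 2) * (X * Y * W) := by
      ring
    have hs1 : (2:ℝ) ≤ 2 * E := by linarith
    have hs2 : 2 * (C * Ab) * (X * W) ≤ 2 * (C * Ab) * E := by
      apply mul_le_mul_of_nonneg_left hXW
      positivity
    have hs3 : 2 * Ab * Y ≤ 2 * Ab * (Real.exp γ * E) := by
      apply mul_le_mul_of_nonneg_left hYbound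
      positivity
    have hs4 : 2 * (C * Ab ^ 2) * (X * Y * W) ≤ 2 * (C * Ab ^ 2) * E := by
      apply mul_le_mul_of_nonneg_left hXYW
      positivity
    have hfinal : tN A e y k
        ≤ 2 + 2 * (C * Ab) * E + 2 * Ab * (Real.exp γ * E) + 2 * (C * Ab ^ 2) * E := by
      rw [hexpand] at hstep3
      linarith
    have hgoal : 2 + 2 * (C * Ab) * E + 2 * Ab * (Real.exp γ * E) + 2 * (C * Ab ^ 2) * E
        ≤ (2 * (1 + C * Ab + Ab * Real.exp γ + C * Ab ^ 2) + S) * E := by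
      have hSE : 0 ≤ S * E := by positivity
      linarith
    linarith

end Core3

end SA7
namespace SA7

lemma exists_decay {c δ' εt : ℝ} (hc : 0 < c) (hδ' : 0 < δ') (hεt : 0 < εt) :
    ∃ M : ℕ, ∀ m : ℕ, M ≤ m → c * Real.exp (-δ' * m) ≤ εt := by
  have hb : Real.exp (-δ') < 1 := Real.exp_lt_one_iff.mpr (by linarith)
  rcases exists_pow_lt_of_lt_one (by positivity : (0:ℝ) < εt / c) hb with ⟨M, hM⟩
  refine ⟨M, fun m hm => ?_⟩
  have h1 : Real.exp (-δ' * m) = Real.exp (-δ') ^ m := by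
    rw [← Real.exp_nat_mul]; ring_nf
  have h2 : Real.exp (-δ') ^ m ≤ Real.exp (-δ') ^ M :=
    pow_le_pow_of_le_one (Real.exp_pos _).le hb.le hm
  rw [h1]
  calc c * Real.exp (-δ') ^ m ≤ c * Real.exp (-δ') ^ M := by nlinarith
    _ ≤ c * (εt / c) := by nlinarith
    _ = εt := by field_simp

section Core4

variable {N : ℕ} {A : Fin N → Matrix (Fin 2) (Fin 2) ℝ} {e : (ℕ → Fin N) → E2} {C δ Q : ℝ}
variable (hAdet : ∀ i, (A i).det ≠ 0)
variable (hunit : ∀ z, ‖e z‖ = 1)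
variable (hpar : ∀ z, ∃ s : ℝ, toE2 ((A (z 0)).mulVec (e z)) = s • e (shift z))
variable (hC : 0 < C) (hδ : 0 < δ)
variable (hcontr : ∀ (z : ℕ → Fin N) (n : ℕ),
  ‖toE2 ((prodRev A z n).mulVec (e z))‖ ≤ C * Real.exp (-δ * n) * alpha1 (prodRev A z n))
variable (hQ1 : 1 ≤ Q)
variable (hQ : ∀ (y : ℕ → Fin N) (m : ℕ),
  alpha1 (prodRev A y m) ^ 2 ≤ Q ^ m * |(prodRev A y m).det|)

include hAdet hunit hpar hC hδ hcontr hQ1 hQ in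
set_option maxHeartbeats 2000000 in
/-- Uniform boundedness of the slopes. -/
lemma tN_bounded : ∃ WW : ℝ, (0 ≤ WW) ∧
    (∃ M : ℕ, 1 ≤ M ∧ (∀ m : ℕ, M ≤ m → C * Real.exp (-δ * m) ≤ 1/2) ∧
      ∀ (y : ℕ → Fin N) (n : ℕ), tN A e y n ≤ WW) := by
  have hQ0 : (0:ℝ) < Q := lt_of_lt_of_le one_pos hQ1
  obtain ⟨M1, hM1⟩ := exists_decay hC hδ (by norm_num : (0:ℝ) < 1/2)
  set S := C * Q ^ (2 * M1 + 1) with hSdef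
  have hS0 : 0 ≤ S := by positivity
  have hS : ∀ (y : ℕ → Fin N) (k : ℕ), k ≤ 2 * M1 + 1 → tN A e y k ≤ S := by
    intro y k hkle
    have h1 := tN_crude hAdet hunit hpar hC hδ hcontr hQ1 hQ y k
    have h2 : Q ^ k ≤ Q ^ (2 * M1 + 1) := pow_le_pow_right₀ hQ1 hkle
    have h3 : Real.exp (-δ * k) ≤ 1 := by
      have hk0 : (0:ℝ) ≤ δ * k := by positivity
      exact Real.exp_le_one_iff.mpr (by linarith)
    have h4 : (0:ℝ) < Q ^ k := by positivity
    calc tN A e y k ≤ C * (Q ^ k * Real.exp (-δ * k)) := h1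
      _ ≤ C * (Q ^ (2 * M1 + 1) * 1) := by
          apply mul_le_mul_of_nonneg_left _ hC.le
          have h5 : Q ^ k * Real.exp (-δ * k) ≤ Q ^ k * 1 :=
            mul_le_mul_of_nonneg_left h3 h4.le
          have h6 : Q ^ k * 1 ≤ Q ^ (2 * M1 + 1) * 1 :=
            mul_le_mul_of_nonneg_right h2 zero_le_one
          linarith
      _ = S := by rw [hSdef, mul_one]
  set γ0 := Real.log Q - δ with hγ0
  have hbase : ∀ (y : ℕ → Fin N) (m : ℕ),
      tN A e y m ≤ (max C 1) * Real.exp ((max γ0 (δ/2)) * m) := by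
    intro y m
    have h1 := tN_crude hAdet hunit hpar hC hδ hcontr hQ1 hQ y m
    have h2 : Q ^ m * Real.exp (-δ * m) = Real.exp (γ0 * m) := by
      have h3 : Q ^ m = Real.exp (Real.log Q * m) := by
        rw [mul_comm, Real.exp_nat_mul, Real.exp_log hQ0]
      rw [h3, ← Real.exp_add, hγ0]
      congr 1
      ring
    rw [h2] at h1
    have h4 : Real.exp (γ0 * m) ≤ Real.exp (max γ0 (δ/2) * m) := by
      apply Real.exp_le_exp.mpr
      exact mul_le_mul_of_nonneg_right (le_max_left _ _) (Nat.cast_nonneg m)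
    calc tN A e y m ≤ C * Real.exp (γ0 * m) := h1
      _ ≤ (max C 1) * Real.exp (max γ0 (δ/2) * m) := by
          apply mul_le_mul (le_max_left _ _) h4 (Real.exp_pos _).le
          exact le_trans zero_le_one (le_max_right C 1)
  -- Stage A iteration
  have hiter : ∀ j : ℕ, ∃ Ab : ℝ, 1 ≤ Ab ∧ ∀ (y : ℕ → Fin N) (n : ℕ),
      tN A e y n ≤ Ab * Real.exp ((max (γ0 - j * (δ/2)) (δ/2)) * n) := by
    intro j
    induction j with
    | zero =>
      refine ⟨max C 1, le_max_right _ _, ?_⟩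
      intro y n
      have h1 := hbase y n
      have h2 : max (γ0 - (0:ℕ) * (δ/2)) (δ/2) = max γ0 (δ/2) := by
        norm_num
      rw [h2]
      exact h1
    | succ j ih =>
      obtain ⟨Ab, hAb1, hAb⟩ := ih
      set γ := max (γ0 - j * (δ/2)) (δ/2) with hγdef
      have hγδ : δ/2 ≤ γ := le_max_right _ _
      have hst := stageA_step hAdet hunit hpar hC hδ hcontr hM1 hS0 hS hγδ hAb1 hAb
      refine ⟨max (2 * (1 + C * Ab + Ab * Real.exp γ + C * Ab ^ 2) + S) 1,
        le_max_right _ _, ?_⟩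
      intro y n
      rw [Nat.cast_succ]
      have h1 := hst y n
      have hexp : max (γ - δ/2) (δ/2) ≤ max (γ0 - ((j:ℝ)+1) * (δ/2)) (δ/2) := by
        apply max_le _ (le_max_right _ _)
        rcases max_cases (γ0 - (j:ℝ) * (δ/2)) (δ/2) with ⟨h, _⟩ | ⟨h, _⟩
        · rw [hγdef, h]
          have heq2 : γ0 - (j:ℝ) * (δ/2) - δ/2 = γ0 - ((j:ℝ)+1) * (δ/2) := by ring
          rw [heq2]
          exact le_max_left _ _
        · rw [hγdef, h]
          have : δ/2 - δ/2 ≤ δ/2 := by linarith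
          exact le_trans this (le_max_right _ _)
      have h5 : Real.exp (max (γ - δ/2) (δ/2) * n)
          ≤ Real.exp (max (γ0 - ((j:ℝ)+1) * (δ/2)) (δ/2) * n) := by
        apply Real.exp_le_exp.mpr
        exact mul_le_mul_of_nonneg_right hexp (Nat.cast_nonneg n)
      have hc1 : 0 ≤ 2 * (1 + C * Ab + Ab * Real.exp γ + C * Ab ^ 2) + S := by
        have := Real.exp_pos γ
        nlinarith
      calc tN A e y n
          ≤ (2 * (1 + C * Ab + Ab * Real.exp γ + C * Ab ^ 2) + S)
            * Real.exp (max (γ - δ/2) (δ/2) * n) := h1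
        _ ≤ (max (2 * (1 + C * Ab + Ab * Real.exp γ + C * Ab ^ 2) + S) 1)
            * Real.exp (max (γ0 - ((j:ℝ)+1) * (δ/2)) (δ/2) * n) := by
            apply mul_le_mul (le_max_left _ _) h5 (Real.exp_pos _).le
            exact le_trans zero_le_one (le_max_right _ 1)
  -- choose j with γ0 - j δ/2 ≤ δ/2
  obtain ⟨j, hj⟩ := exists_nat_ge ((γ0 - δ/2) / (δ/2))
  have hδ2 : (0:ℝ) < δ/2 := by linarith
  have hj2 : γ0 - j * (δ/2) ≤ δ/2 := by
    rw [div_le_iff₀ hδ2] at hj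
    linarith
  obtain ⟨AStar, hAStar1, hAStar⟩ := hiter j
  have hAS : ∀ (y : ℕ → Fin N) (n : ℕ), tN A e y n ≤ AStar * Real.exp ((δ/2) * n) := by
    intro y n
    have h1 := hAStar y n
    rwa [max_eq_right hj2] at h1
  -- Stage B
  obtain ⟨M2a, hM2a⟩ := exists_decay
    (show (0:ℝ) < 2*C + 2*AStar*C by nlinarith) hδ2 (by norm_num : (0:ℝ) < 1/2)
  set M := max (max M1 M2a) 1 with hMdef
  have hM_M1 : M1 ≤ M := le_trans (le_max_left _ _) (le_max_left _ _)
  have hM_M2a : M2a ≤ M := le_trans (le_max_right _ _) (le_max_left _ _)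
  have hM_1 : 1 ≤ M := le_max_right _ _
  have hεM : C * Real.exp (-δ * M) ≤ 1/2 := hM1 M hM_M1
  set W0 := AStar * Real.exp (δ/2 * M) with hW0def
  have hW0_pos : 0 < W0 := by
    have := Real.exp_pos (δ/2 * M)
    nlinarith
  set K0 := 2 * (1 + W0) with hK0def
  have hK0_pos : 0 < K0 := by nlinarith
  set WW := max W0 (2 * K0) with hWWdef
  have hWW0 : 0 ≤ WW := le_trans hW0_pos.le (le_max_left _ _)
  -- q bound
  have hq : 2 * (1 + W0) * (C * Real.exp (-δ * M)) ≤ 1/2 := by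
    have h2 : Real.exp (δ/2 * M) * Real.exp (-δ * M) = Real.exp (-(δ/2) * M) := by
      rw [← Real.exp_add]; congr 1; ring
    have h4 : Real.exp (-δ * (M:ℝ)) ≤ Real.exp (-(δ/2) * (M:ℝ)) := by
      apply Real.exp_le_exp.mpr
      have : (0:ℝ) ≤ (δ/2) * M := by positivity
      linarith
    have h3 := hM2a M hM_M2a
    have hexpand : 2 * (1 + W0) * (C * Real.exp (-δ * M))
        = 2 * C * Real.exp (-δ * M) + 2 * AStar * C * (Real.exp (δ/2 * M) * Real.exp (-δ * M)) := by
      rw [hW0def]; ring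
    rw [hexpand, h2]
    have h5 : 2 * C * Real.exp (-δ * (M:ℝ)) ≤ 2 * C * Real.exp (-(δ/2) * (M:ℝ)) := by
      apply mul_le_mul_of_nonneg_left h4 (by positivity)
    have h6 : (2*C + 2*AStar*C) * Real.exp (-(δ/2) * (M:ℝ)) ≤ 1/2 := h3
    have h7 : 0 < Real.exp (-(δ/2) * (M:ℝ)) := Real.exp_pos _
    nlinarith
  -- uniform bound by strong induction
  have hunif : ∀ (n : ℕ) (y : ℕ → Fin N), tN A e y n ≤ WW := by
    intro n
    induction n using Nat.strong_induction_on with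
    | _ n ih =>
      intro y
      by_cases hn : n < M
      · have h1 := hAS y n
        have h2 : Real.exp ((δ/2) * n) ≤ Real.exp ((δ/2) * M) := by
          apply Real.exp_le_exp.mpr
          apply mul_le_mul_of_nonneg_left _ hδ2.le
          exact_mod_cast hn.le
        calc tN A e y n ≤ AStar * Real.exp ((δ/2) * n) := h1
          _ ≤ AStar * Real.exp ((δ/2) * M) := by
              apply mul_le_mul_of_nonneg_left h2 (by linarith)
          _ = W0 := by rw [hW0def]
          _ ≤ WW := le_max_left _ _
      · push_neg at hn
        set n' := n - M with hn'def
        have hn'M : n' + M = n := by omega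
        have hn'lt : n' < n := by omega
        have hεM1 : C * Real.exp (-δ * M) < 1 := by linarith
        have hrec := tN_rec hAdet hunit hpar hC hcontr y n' M hεM1
        rw [hn'M] at hrec
        set tb := tN A e y n with htbdef
        set t1 := tN A e (shift^[n'] y) M with ht1def
        set t0 := tN A e y n' with ht0def
        have ht1 : t1 ≤ W0 := by
          have h10 := hAS (shift^[n'] y) M
          rw [hW0def]
          exact h10
        have ht0 : t0 ≤ WW := ih n' hn'lt y
        have ht0n : 0 ≤ t0 := tN_nonneg hAdet hunit hpar hC hcontr y n'
        have ht1n : 0 ≤ t1 := tN_nonneg hAdet hunit hpar hC hcontr _ M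
        clear_value tb t1 t0
        set ε := C * Real.exp (-δ * (M:ℝ)) with hεdef
        have hε_pos : 0 < ε := mul_pos hC (Real.exp_pos _)
        have hεh : ε ≤ 1/2 := hεM
        have hfrac : (1 + t1) / (1 - ε) ≤ 2 * (1 + W0) := by
          rw [div_le_iff₀ (by linarith : (0:ℝ) < 1 - ε)]
          nlinarith
        have hstep : tb ≤ 2 * (1 + W0) * (ε * WW + 1) := by
          calc tb ≤ ((1 + t1) / (1 - ε)) * (ε * t0 + 1) := hrec
            _ ≤ 2 * (1 + W0) * (ε * WW + 1) := by
                apply mul_le_mul hfrac _ (by positivity) (by positivity)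
                have h11 := mul_le_mul_of_nonneg_left ht0 hε_pos.le
                linarith
        have hfin : 2 * (1 + W0) * (ε * WW + 1) ≤ WW := by
          have hqq : 2 * (1 + W0) * ε ≤ 1/2 := by
            calc 2 * (1 + W0) * ε = 2 * (1 + W0) * (C * Real.exp (-δ * M)) := by rw [hεdef]
              _ ≤ 1/2 := hq
          have hK0WW : K0 ≤ WW / 2 := by
            have h12 := le_max_right W0 (2 * K0)
            rw [← hWWdef] at h12
            linarith
          have hexp2 : 2 * (1 + W0) * (ε * WW + 1) = (2 * (1 + W0) * ε) * WW + K0 := by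
            rw [hK0def]; ring
          rw [hexp2]
          have h8 : (2 * (1 + W0) * ε) * WW ≤ (1/2) * WW :=
            mul_le_mul_of_nonneg_right hqq hWW0
          linarith
        linarith
  exact ⟨WW, hWW0, M, hM_1, fun m hm => hM1 m (le_trans hM_M1 hm), fun y n => hunif n y⟩

include hAdet hunit hpar hC hδ hcontr hQ1 hQ in
set_option maxHeartbeats 1000000 in
/-- The main contraction estimate: products contract the stable direction
at rate comparable with `α₂`. -/
lemma exists_K : ∃ K : ℝ, 1 ≤ K ∧ ∀ (y : ℕ → Fin N) (n : ℕ),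
    aN A e y n ≤ K * alpha2 (prodRev A y n) := by
  obtain ⟨WW, hWW0, M, hM1', hMhalf, hWW⟩ := tN_bounded hAdet hunit hpar hC hδ hcontr hQ1 hQ
  refine ⟨max (2 * (1 + WW)) (Q ^ M), le_trans (by linarith) (le_max_left _ _), ?_⟩
  intro y n
  set K := max (2 * (1 + WW)) (Q ^ M) with hKdef
  set α := alpha1 (prodRev A y n) with hα
  set D := |(prodRev A y n).det| with hD
  have hα_pos : 0 < α := alpha1_pos (det_prodRev_ne hAdet y n)
  have hD_pos : 0 < D := abs_pos.mpr (det_prodRev_ne hAdet y n)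
  have h4 : aN A e y n * hN A e y n = D := aN_mul_hN hAdet hunit hpar y n
  have haN_pos : 0 < aN A e y n := aN_pos hAdet hunit hpar y n
  have hhN_pos : 0 < hN A e y n := hN_pos hAdet hunit hpar y n
  have halpha2 : alpha2 (prodRev A y n) = D / α := rfl
  rw [halpha2]
  have hKD : 0 ≤ K := le_trans (by linarith) (le_max_left (2 * (1 + WW)) (Q ^ M))
  suffices hfin : aN A e y n * α ≤ K * D by
    rw [show K * (D / α) = K * D / α from by ring, le_div_iff₀ hα_pos]
    exact hfin
  by_cases hn : M ≤ n
  · have hε := hMhalf n hn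
    have hVge := normVV_ge hunit hC hcontr y n
    have hVle := normVV_le (A := A) hunit y n
    have htn := hWW y n
    have hcN_le : cN A e y n ≤ WW * hN A e y n := by
      have h6 : tN A e y n = cN A e y n / hN A e y n := rfl
      rw [h6, div_le_iff₀ hhN_pos] at htn
      exact htn
    have hαub : α ≤ 2 * (1 + WW) * hN A e y n := by
      have h7 : (1 - C * Real.exp (-δ * n)) * α ≤ ‖VV A e y n‖ := hVge
      have h8 : (1/2) * α ≤ (1 - C * Real.exp (-δ * n)) * α := by
        apply mul_le_mul_of_nonneg_right _ hα_pos.le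
        linarith
      linarith
    calc aN A e y n * α ≤ aN A e y n * (2 * (1 + WW) * hN A e y n) :=
          mul_le_mul_of_nonneg_left hαub haN_pos.le
      _ = 2 * (1 + WW) * (aN A e y n * hN A e y n) := by ring
      _ = 2 * (1 + WW) * D := by rw [h4]
      _ ≤ K * D := by
          apply mul_le_mul_of_nonneg_right _ hD_pos.le
          exact le_max_left _ _
  · push_neg at hn
    have haα : aN A e y n ≤ α := by
      have h9 := norm_mulVec_le (prodRev A y n) (e y)
      rw [hunit, mul_one] at h9
      exact h9
    have hQn := hQ y n
    have hQmono : Q ^ n ≤ Q ^ M := pow_le_pow_right₀ hQ1 hn.le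
    calc aN A e y n * α ≤ α * α := mul_le_mul_of_nonneg_right haα hα_pos.le
      _ = α ^ 2 := by ring
      _ ≤ Q ^ n * D := hQn
      _ ≤ Q ^ M * D := mul_le_mul_of_nonneg_right hQmono hD_pos.le
      _ ≤ K * D := by
          apply mul_le_mul_of_nonneg_right _ hD_pos.le
          exact le_max_right _ _

end Core4

end SA7
namespace SA7

variable {N : ℕ}

lemma mapWord_nil (f : Fin N → E2 → E2) : mapWord f [] = id := rfl

lemma mapWord_cons (f : Fin N → E2 → E2) (i : Fin N) (w : List (Fin N)) :
    mapWord f (i :: w) = f i ∘ mapWord f w := rfl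

lemma mapWord_append (f : Fin N → E2 → E2) (u v : List (Fin N)) :
    mapWord f (u ++ v) = mapWord f u ∘ mapWord f v := by
  unfold mapWord
  rw [List.foldr_append]
  induction u with
  | nil => rfl
  | cons i u ih =>
    simp only [List.foldr_cons]
    rw [ih]
    rfl

lemma mapWord_sub (A : Fin N → Matrix (Fin 2) (Fin 2) ℝ) (t : Fin N → E2)
    (w : List (Fin N)) (p q : E2) :
    mapWord (affIFS A t) w p - mapWord (affIFS A t) w q
      = toE2 ((listProd A w).mulVec (p - q)) := by
  induction w generalizing p q with
  | nil =>
    show p - q = toE2 ((1 : Matrix (Fin 2) (Fin 2) ℝ).mulVec (p - q))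
    rw [Matrix.one_mulVec]
    rfl
  | cons i w ih =>
    show affIFS A t i (mapWord (affIFS A t) w p) - affIFS A t i (mapWord (affIFS A t) w q) = _
    have h1 : ∀ a b : E2, affIFS A t i a - affIFS A t i b = toE2 ((A i).mulVec (a - b)) := by
      intro a b
      show (toE2 ((A i).mulVec a) + t i) - (toE2 ((A i).mulVec b) + t i) = _
      rw [Matrix.mulVec_sub]
      show _ = toE2 ((A i).mulVec a) - toE2 ((A i).mulVec b)
      abel
    rw [h1, ← WithLp.ofLp_sub, ih p q, listProd_cons, ← Matrix.mulVec_mulVec]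
    rfl

lemma mapWord_image_subset {f : Fin N → E2 → E2} {Λ : Set E2}
    (hΛ : Λ = ⋃ i, f i '' Λ) (w : List (Fin N)) : mapWord f w '' Λ ⊆ Λ := by
  induction w with
  | nil => rw [mapWord_nil, Set.image_id]
  | cons i w ih =>
    rw [mapWord_cons, Set.image_comp]
    intro x hx
    rcases hx with ⟨z, hz, rfl⟩
    have h2 : f i z ∈ f i '' Λ := Set.mem_image_of_mem _ (ih hz)
    rw [hΛ]
    exact Set.mem_iUnion.mpr ⟨i, h2⟩

lemma covering {f : Fin N → E2 → E2} {Λ : Set E2}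
    (hΛ : Λ = ⋃ i, f i '' Λ) (z : E2) (hz : z ∈ Λ) (n : ℕ) :
    ∃ w : List (Fin N), w.length = n ∧ z ∈ mapWord f w '' Λ := by
  induction n generalizing z with
  | zero => exact ⟨[], rfl, by rw [mapWord_nil, Set.image_id]; exact hz⟩
  | succ n ih =>
    have h1 : z ∈ ⋃ i, f i '' Λ := by rw [← hΛ]; exact hz
    rcases Set.mem_iUnion.mp h1 with ⟨i, z1, hz1, rfl⟩
    rcases ih z1 hz1 with ⟨w, hw, z2, hz2, rfl⟩
    exact ⟨i :: w, by simp [hw], z2, hz2, rfl⟩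

lemma first_diff {w w' : List (Fin N)} (hlen : w.length = w'.length) (hne : w ≠ w') :
    ∃ (u : List (Fin N)) (j j' : Fin N) (s s' : List (Fin N)),
      j ≠ j' ∧ w = u ++ j :: s ∧ w' = u ++ j' :: s' := by
  induction w generalizing w' with
  | nil =>
    cases w' with
    | nil => exact absurd rfl hne
    | cons a l => simp at hlen
  | cons a l ih =>
    cases w' with
    | nil => simp at hlen
    | cons b l' =>
      by_cases hab : a = b
      · subst hab
        have hll : l ≠ l' := by
          intro h; exact hne (by rw [h])
        have hlen2 : l.length = l'.length := by simpa using hlen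
        rcases ih hlen2 hll with ⟨u, j, j', s, s', hjj, hl, hl'⟩
        exact ⟨a :: u, j, j', s, s', hjj, by rw [hl]; rfl, by rw [hl']; rfl⟩
      · exact ⟨[], a, b, l, l', hab, rfl, rfl⟩

lemma alpha1_listProd_le_one {A : Fin N → Matrix (Fin 2) (Fin 2) ℝ}
    (hA1 : ∀ i, alpha1 (A i) < 1) (w : List (Fin N)) : alpha1 (listProd A w) ≤ 1 := by
  induction w with
  | nil => rw [listProd_nil]; exact alpha1_one_le
  | cons i w ih =>
    rw [listProd_cons]
    calc alpha1 (A i * listProd A w) ≤ alpha1 (A i) * alpha1 (listProd A w) :=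
        alpha1_mul_le _ _
      _ ≤ 1 * 1 := by
          apply mul_le_mul (hA1 i).le ih (alpha1_nonneg _) zero_le_one
      _ = 1 := by norm_num

/-- The attractor lies in the closure of the open set from the SSC. -/
lemma attractor_subset_closure {A : Fin N → Matrix (Fin 2) (Fin 2) ℝ} {t : Fin N → E2}
    {Λ : Set E2} (hN0 : 0 < N)
    (hA1 : ∀ i, alpha1 (A i) < 1)
    (hΛc : IsCompact Λ) (hΛne : Λ.Nonempty) (hΛeq : Λ = ⋃ i, affIFS A t i '' Λ)
    {O : Set E2} (hOo : IsOpen O) (hOne : O.Nonempty) (hOb : Bornology.IsBounded O)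
    (hsub : ∀ i, affIFS A t i '' closure O ⊆ O) :
    Λ ⊆ closure O := by
  set KO := closure O with hKO
  have hKOc : IsClosed KO := isClosed_closure
  have hKOne : KO.Nonempty := hOne.closure
  -- the maximum of infDist over Λ
  have hcont : Continuous (fun p : E2 => Metric.infDist p KO) := continuous_infDist_pt KO
  obtain ⟨p₀, hp₀Λ, hp₀⟩ := hΛc.exists_isMaxOn hΛne hcont.continuousOn
  suffices hzero : Metric.infDist p₀ KO ≤ 0 by
    intro p hp
    have h1 : Metric.infDist p KO ≤ Metric.infDist p₀ KO := hp₀ hp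
    have h2 : Metric.infDist p KO = 0 := le_antisymm (le_trans h1 hzero) Metric.infDist_nonneg
    exact (hKOc.mem_iff_infDist_zero hKOne).mpr h2
  -- p₀ = f j q for some j, q ∈ Λ
  have h3 : p₀ ∈ ⋃ i, affIFS A t i '' Λ := by rw [← hΛeq]; exact hp₀Λ
  rcases Set.mem_iUnion.mp h3 with ⟨j, q, hqΛ, hfq⟩
  -- nearest point of KO to q
  have hKOcomp : IsCompact KO := Metric.isCompact_of_isClosed_isBounded hKOc hOb.closure
  obtain ⟨k, hkKO, hk⟩ := hKOcomp.exists_infDist_eq_dist hKOne q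
  have hfk : affIFS A t j k ∈ KO := subset_closure ((hsub j) (Set.mem_image_of_mem _ hkKO))
  have h4 : Metric.infDist p₀ KO ≤ dist p₀ (affIFS A t j k) :=
    Metric.infDist_le_dist_of_mem hfk
  have h5 : dist p₀ (affIFS A t j k) = dist (affIFS A t j q) (affIFS A t j k) := by rw [hfq]
  have h6 : dist (affIFS A t j q) (affIFS A t j k) ≤ alpha1 (A j) * dist q k := by
    rw [dist_eq_norm, dist_eq_norm]
    have h7 : affIFS A t j q - affIFS A t j k = toE2 ((A j).mulVec (q - k)) := by
      unfold affIFS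
      rw [Matrix.mulVec_sub]
      show (toE2 ((A j).mulVec q) + t j) - (toE2 ((A j).mulVec k) + t j)
          = toE2 ((A j).mulVec q) - toE2 ((A j).mulVec k)
      abel
    rw [h7]
    exact norm_mulVec_le _ _
  have h8 : dist q k = Metric.infDist q KO := hk.symm
  have h9 : Metric.infDist q KO ≤ Metric.infDist p₀ KO := hp₀ hqΛ
  have h10 : alpha1 (A j) * dist q k ≤ alpha1 (A j) * Metric.infDist p₀ KO := by
    rw [h8]
    exact mul_le_mul_of_nonneg_left h9 (alpha1_nonneg _)
  by_contra hcon
  push_neg at hcon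
  have h11 := (hA1 j)
  nlinarith [h4, h5 ▸ h4, h6, h10, Metric.infDist_nonneg (x := p₀) (s := KO)]

/-- Positive gap between the images of the closure under distinct maps. -/
lemma exists_gap {f : Fin N → E2 → E2} (hf : ∀ i, Continuous (f i))
    {O : Set E2} (hOne : O.Nonempty) (hOb : Bornology.IsBounded O)
    (hdisj : Pairwise fun i j => Disjoint (f i '' closure O) (f j '' closure O)) :
    ∃ g > (0:ℝ), ∀ (i j : Fin N), i ≠ j →
      ∀ p ∈ f i '' closure O, ∀ q ∈ f j '' closure O, g ≤ dist p q := by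
  set KO := closure O with hKO
  have hKOne : KO.Nonempty := hOne.closure
  have hKOcomp : IsCompact KO := Metric.isCompact_of_isClosed_isBounded isClosed_closure hOb.closure
  have hSc : ∀ i, IsCompact (f i '' KO) := fun i => hKOcomp.image (hf i)
  have hSne : ∀ i, (f i '' KO).Nonempty := fun i => hKOne.image _
  -- for each pair, a positive gap
  have hpair : ∀ i j : Fin N, i ≠ j →
      ∃ g > (0:ℝ), ∀ p ∈ f i '' KO, ∀ q ∈ f j '' KO, g ≤ dist p q := by
    intro i j hij
    obtain ⟨p₀, hp₀, hp₀min⟩ := (hSc i).exists_isMinOn (hSne i)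
      (continuous_infDist_pt (f j '' KO)).continuousOn
    have hp₀pos : 0 < Metric.infDist p₀ (f j '' KO) := by
      have hnotin : p₀ ∉ f j '' KO := fun hmem =>
        (hdisj hij).ne_of_mem hp₀ hmem rfl
      have hne0 : Metric.infDist p₀ (f j '' KO) ≠ 0 := fun h0 =>
        hnotin (((hSc j).isClosed.mem_iff_infDist_zero (hSne j)).mpr h0)
      exact lt_of_le_of_ne Metric.infDist_nonneg (Ne.symm hne0)
    refine ⟨Metric.infDist p₀ (f j '' KO), hp₀pos, ?_⟩
    intro p hp q hq
    calc Metric.infDist p₀ (f j '' KO) ≤ Metric.infDist p (f j '' KO) := hp₀min hp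
      _ ≤ dist p q := Metric.infDist_le_dist_of_mem hq
  choose! gg hgg hgap using hpair
  by_cases hNpairs : ∃ p : Fin N × Fin N, p.1 ≠ p.2
  · obtain ⟨cmin, hcmin⟩ := Finset.exists_min_image
      (Finset.univ.filter (fun p : Fin N × Fin N => p.1 ≠ p.2)) (fun p => gg p.1 p.2)
      (by
        rcases hNpairs with ⟨p, hp⟩
        exact ⟨p, by simp [hp]⟩)
    obtain ⟨hcmem, hcle⟩ := hcmin
    have hc12 : cmin.1 ≠ cmin.2 := by
      have := Finset.mem_filter.mp hcmem
      exact this.2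
    refine ⟨gg cmin.1 cmin.2, hgg _ _ hc12, ?_⟩
    intro i j hij p hp q hq
    have h1 : gg cmin.1 cmin.2 ≤ gg i j := hcle (i, j) (by simp [hij])
    exact le_trans h1 (hgap i j hij p hp q hq)
  · push_neg at hNpairs
    exact ⟨1, one_pos, fun i j hij => absurd (hNpairs (i, j)) hij⟩

end SA7
namespace SA7

variable {N : ℕ}

/-- The sequence starting with the reversal of `w` and continuing with `i`. -/
def wordSeq (w : List (Fin N)) (i : ℕ → Fin N) : ℕ → Fin N :=
  fun k => if h : k < w.length then w[w.length - 1 - k]'(by omega) else i (k - w.length)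

lemma wordSeq_shift (w : List (Fin N)) (i : ℕ → Fin N) :
    shift^[w.length] (wordSeq w i) = i := by
  funext k
  rw [shift_iterate_apply]
  unfold wordSeq
  rw [dif_neg (by omega)]
  congr 1
  omega

lemma wordSeq_prodRev (A : Fin N → Matrix (Fin 2) (Fin 2) ℝ) (w : List (Fin N))
    (i : ℕ → Fin N) :
    prodRev A (wordSeq w i) w.length = listProd A w := by
  unfold prodRev
  suffices h : (List.map (wordSeq w i) (List.range w.length).reverse) = w by rw [h]
  apply List.ext_getElem
  · simp
  · intro k h1 h2
    have hk : k < w.length := by simpa using h1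
    rw [List.getElem_map, List.getElem_reverse, List.getElem_range]
    unfold wordSeq
    have hidx : (List.range w.length).length - 1 - k < w.length := by
      simp; omega
    rw [dif_pos (by simpa using hidx)]
    simp only [List.length_range]
    congr 1
    omega

lemma alpha1_prodRev_le (A : Fin N → Matrix (Fin 2) (Fin 2) ℝ) {rbar : ℝ}
    (hr : ∀ i, alpha1 (A i) ≤ rbar) (hr0 : 0 ≤ rbar) (y : ℕ → Fin N) (m : ℕ) :
    alpha1 (prodRev A y m) ≤ rbar ^ m := by
  induction m with
  | zero => rw [prodRev_zero, pow_zero]; exact alpha1_one_le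
  | succ m ih =>
    rw [prodRev_succ, pow_succ]
    calc alpha1 (A (y m) * prodRev A y m) ≤ alpha1 (A (y m)) * alpha1 (prodRev A y m) :=
        alpha1_mul_le _ _
      _ ≤ rbar * rbar ^ m := mul_le_mul (hr _) ih (alpha1_nonneg _) hr0
      _ = rbar ^ m * rbar := by ring

lemma det_prodRev_ge (A : Fin N → Matrix (Fin 2) (Fin 2) ℝ) {dbar : ℝ}
    (hd : ∀ i, dbar ≤ |(A i).det|) (hd0 : 0 < dbar) (y : ℕ → Fin N) (m : ℕ) :
    dbar ^ m ≤ |(prodRev A y m).det| := by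
  induction m with
  | zero =>
    rw [prodRev_zero, pow_zero, Matrix.det_one]
    norm_num
  | succ m ih =>
    rw [prodRev_succ, Matrix.det_mul, abs_mul, pow_succ]
    calc dbar ^ m * dbar = dbar * dbar ^ m := by ring
      _ ≤ |(A (y m)).det| * |(prodRev A y m).det| := by
          apply mul_le_mul (hd _) ih (by positivity) (abs_nonneg _)

end SA7

open SA7

/-- **Lemma.** Under dominated splitting and strong separation there is `c₁ > 0` such that
for every `i ∈ Σ⁺`, `x ∈ Λ`, and nonempty word `w` with `x ∈ f_w(Λ)`:
`B^{ss}_{c₁⁻¹ α₂(A_w)}(x,i) ⊆ f_w(Λ) ∩ (x + e_ss(i)) ⊆ B^{ss}_{c₁ α₂(A_w)}(x,i)`,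
where `B^{ss}_r(x,i) = {z ∈ Λ ∩ (x + e_ss(i)) : |z - x| ≤ r}`. -/
theorem statement7
    {N : ℕ} (A : Fin N → Matrix (Fin 2) (Fin 2) ℝ)
    (hA : ∀ i, alpha1 (A i) < 1 ∧ (A i).det ≠ 0)
    (t : Fin N → E2) (Λ : Set E2) (hΛ : IsAttractor (affIFS A t) Λ)
    (ess : (ℕ → Fin N) → Submodule ℝ E2) (hess : IsStrongStableDirections A ess)
    (hds : DominatedSplitting A) (hssc : SSC (affIFS A t)) :
    ∃ c₁ > (0:ℝ), ∀ (i : ℕ → Fin N), ∀ x ∈ Λ, ∀ w : List (Fin N), w ≠ [] →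
      x ∈ mapWord (affIFS A t) w '' Λ →
      {z | z ∈ Λ ∧ z - x ∈ ess i ∧ dist z x ≤ c₁⁻¹ * alpha2 (listProd A w)} ⊆
          (mapWord (affIFS A t) w '' Λ) ∩ {z | z - x ∈ ess i} ∧
      (mapWord (affIFS A t) w '' Λ) ∩ {z | z - x ∈ ess i} ⊆
          {z | z ∈ Λ ∧ z - x ∈ ess i ∧ dist z x ≤ c₁ * alpha2 (listProd A w)} := by
  classical
  obtain ⟨hΛc, hΛne, hΛeq⟩ := hΛ
  rcases Nat.eq_zero_or_pos N with hN0 | hN0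
  · exfalso
    rcases hΛne with ⟨x0, hx0⟩
    rw [hΛeq] at hx0
    rcases Set.mem_iUnion.mp hx0 with ⟨i, _⟩
    subst hN0
    exact i.elim0
  obtain ⟨hrank, heqv, C, hC, δ, hδ, hct⟩ := hess
  have hAdet : ∀ i, (A i).det ≠ 0 := fun i => (hA i).2
  have hA1 : ∀ i, alpha1 (A i) < 1 := fun i => (hA i).1
  -- choice of unit spanning vectors
  have hex : ∀ z, ∃ u : E2, u ∈ ess z ∧ ‖u‖ = 1 ∧ ess z = Submodule.span ℝ {u} := by
    intro z
    have hb : ess z ≠ ⊥ := by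
      intro h
      have h2 := hrank z
      rw [h] at h2
      simp at h2
    obtain ⟨v, hv, hv0⟩ := Submodule.exists_mem_ne_zero_of_ne_bot hb
    have hspan : Submodule.span ℝ {v} = ess z := by
      apply Submodule.eq_of_le_of_finrank_le
      · rw [Submodule.span_le]
        simpa using hv
      · rw [hrank z, finrank_span_singleton hv0]
    have hvn : ‖v‖ ≠ 0 := norm_ne_zero_iff.mpr hv0
    refine ⟨‖v‖⁻¹ • v, Submodule.smul_mem _ _ hv, ?_, ?_⟩
    · rw [norm_smul, norm_inv, norm_norm, inv_mul_cancel₀ hvn]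
    · rw [Submodule.span_singleton_smul_eq (IsUnit.mk0 _ (inv_ne_zero hvn)) v, hspan]
  choose e he1 he2 he3 using hex
  have hpar : ∀ z, ∃ s : ℝ, toE2 ((A (z 0)).mulVec (e z)) = s • e (shift z) := by
    intro z
    have h1 : toE2 ((A (z 0)).mulVec (e z)) ∈ ess (shift z) := by
      rw [← heqv z]
      exact Submodule.mem_map_of_mem (he1 z)
    rw [he3 (shift z)] at h1
    obtain ⟨s, hs⟩ := Submodule.mem_span_singleton.mp h1
    exact ⟨s, hs.symm⟩
  have hcontr : ∀ (z : ℕ → Fin N) (n : ℕ),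
      ‖toE2 ((prodRev A z n).mulVec (e z))‖
        ≤ C * Real.exp (-δ * n) * alpha1 (prodRev A z n) := by
    intro z n
    have h1 := hct z n (e z) (he1 z)
    rwa [he2 z, mul_one] at h1
  -- the per-letter bounds
  have hNne : (Finset.univ : Finset (Fin N)).Nonempty := ⟨⟨0, hN0⟩, Finset.mem_univ _⟩
  set rbar := Finset.univ.sup' hNne (fun i => alpha1 (A i)) with hrbar
  set dbar := Finset.univ.inf' hNne (fun i => |(A i).det|) with hdbar
  have hrle : ∀ i, alpha1 (A i) ≤ rbar := by
    intro i
    rw [hrbar]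
    exact Finset.le_sup' (fun i => alpha1 (A i)) (Finset.mem_univ i)
  have hr0 : 0 ≤ rbar := le_trans (alpha1_nonneg _) (hrle ⟨0, hN0⟩)
  have hdle : ∀ i, dbar ≤ |(A i).det| := by
    intro i
    rw [hdbar]
    exact Finset.inf'_le (fun i => |(A i).det|) (Finset.mem_univ i)
  have hd0 : 0 < dbar := by
    rw [hdbar, Finset.lt_inf'_iff]
    intro i _
    exact abs_pos.mpr (hAdet i)
  set Q := max (rbar ^ 2 / dbar) 1 with hQdef
  have hQ1 : 1 ≤ Q := le_max_right _ _
  have hQ : ∀ (y : ℕ → Fin N) (m : ℕ),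
      alpha1 (prodRev A y m) ^ 2 ≤ Q ^ m * |(prodRev A y m).det| := by
    intro y m
    have h1 := alpha1_prodRev_le A hrle hr0 y m
    have h2 := det_prodRev_ge A hdle hd0 y m
    have h3 : alpha1 (prodRev A y m) ^ 2 ≤ (rbar ^ 2) ^ m := by
      have h4 : alpha1 (prodRev A y m) ^ 2 ≤ (rbar ^ m) ^ 2 := by
        have h5 := alpha1_nonneg (prodRev A y m)
        nlinarith
      calc alpha1 (prodRev A y m) ^ 2 ≤ (rbar ^ m) ^ 2 := h4
        _ = (rbar ^ 2) ^ m := by rw [← pow_mul, ← pow_mul, Nat.mul_comm]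
    have h5 : (rbar ^ 2) ^ m = (rbar ^ 2 / dbar) ^ m * dbar ^ m := by
      rw [← mul_pow, div_mul_cancel₀ _ hd0.ne']
    have h6 : (rbar ^ 2 / dbar) ^ m ≤ Q ^ m := by
      apply pow_le_pow_left₀ (by positivity) (le_max_left _ _)
    have h7 : (0:ℝ) ≤ dbar ^ m := by positivity
    calc alpha1 (prodRev A y m) ^ 2 ≤ (rbar ^ 2 / dbar) ^ m * dbar ^ m := by
          rw [← h5]; exact h3
      _ ≤ Q ^ m * dbar ^ m := mul_le_mul_of_nonneg_right h6 h7
      _ ≤ Q ^ m * |(prodRev A y m).det| := mul_le_mul_of_nonneg_left h2 (by positivity)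
  obtain ⟨K, hK1, hK⟩ := exists_K hAdet he2 hpar hC hδ hcontr hQ1 hQ
  set D := Metric.diam Λ with hDdef
  have hD0 : 0 ≤ D := Metric.diam_nonneg
  have hdistD : ∀ p ∈ Λ, ∀ q ∈ Λ, dist p q ≤ D := fun p hp q hq =>
    Metric.dist_le_diam_of_mem hΛc.isBounded hp hq
  obtain ⟨O, hOo, hOne, hOb, hsub, hdisj⟩ := hssc
  have hfc : ∀ i, Continuous (affIFS A t i) := by
    intro i
    show Continuous fun x : E2 => toE2 ((A i).mulVec x) + t i
    exact ((LinearMap.toContinuousLinearMap (Matrix.toEuclideanLin (A i))).continuous).add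
      continuous_const
  have hΛKO : Λ ⊆ closure O := attractor_subset_closure hN0 hA1 hΛc hΛne hΛeq hOo hOne hOb hsub
  obtain ⟨g, hg0, hgap⟩ := exists_gap hfc hOne hOb hdisj
  have hKD0 : (0:ℝ) ≤ K * D := mul_nonneg (by linarith) hD0
  have h2g : (0:ℝ) < 2/g := by positivity
  refine ⟨K * D + 2/g + 1, by linarith, ?_⟩
  set c₁ := K * D + 2/g + 1 with hc₁def
  have hc₁pos : 0 < c₁ := by rw [hc₁def]; linarith
  have hc₁inv : c₁⁻¹ ≤ g/2 := by
    have hle : 2/g ≤ c₁ := by rw [hc₁def]; linarith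
    have h1 := inv_anti₀ h2g hle
    rwa [inv_div] at h1
  intro i x hxΛ w hwne hxw
  constructor
  · -- first inclusion
    intro z hz
    obtain ⟨hzΛ, hzline, hzdist⟩ := hz
    refine ⟨?_, hzline⟩
    obtain ⟨w', hw'len, hzw'⟩ := covering hΛeq z hzΛ w.length
    by_cases hww : w' = w
    · rwa [hww] at hzw'
    · exfalso
      obtain ⟨u, j, j', s, s', hjj, hw_eq, hw'_eq⟩ :=
        first_diff (hw'len.symm) (fun h => hww h.symm)
      have hximg : ∃ p ∈ affIFS A t j '' (closure O), mapWord (affIFS A t) u p = x := by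
        rw [hw_eq, mapWord_append] at hxw
        rcases hxw with ⟨x0, hx0, hxx⟩
        refine ⟨mapWord (affIFS A t) (j :: s) x0, ?_, hxx⟩
        rw [mapWord_cons]
        exact Set.mem_image_of_mem _
          (hΛKO (mapWord_image_subset hΛeq s (Set.mem_image_of_mem _ hx0)))
      have hzimg : ∃ p ∈ affIFS A t j' '' (closure O), mapWord (affIFS A t) u p = z := by
        rw [hw'_eq, mapWord_append] at hzw'
        rcases hzw' with ⟨z0, hz0, hzz⟩
        refine ⟨mapWord (affIFS A t) (j' :: s') z0, ?_, hzz⟩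
        rw [mapWord_cons]
        exact Set.mem_image_of_mem _
          (hΛKO (mapWord_image_subset hΛeq s' (Set.mem_image_of_mem _ hz0)))
      obtain ⟨px, hpx, hpxe⟩ := hximg
      obtain ⟨pz, hpz, hpze⟩ := hzimg
      have hgap1 : g ≤ dist pz px := hgap j' j (Ne.symm hjj) pz hpz px hpx
      have hdistlow : alpha2 (listProd A u) * dist pz px ≤ dist z x := by
        rw [← hpze, ← hpxe, dist_eq_norm, dist_eq_norm, mapWord_sub]
        exact alpha2_norm_le (det_listProd_ne hAdet u) _
      have ha2w : alpha2 (listProd A w) ≤ alpha2 (listProd A u) := by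
        rw [hw_eq, listProd_append]
        calc alpha2 (listProd A u * listProd A (j :: s))
            ≤ alpha2 (listProd A u) * alpha1 (listProd A (j :: s)) :=
              alpha2_mul_le_right (det_listProd_ne hAdet u) (det_listProd_ne hAdet (j :: s))
          _ ≤ alpha2 (listProd A u) * 1 :=
              mul_le_mul_of_nonneg_left (alpha1_listProd_le_one hA1 _) (alpha2_nonneg _)
          _ = alpha2 (listProd A u) := mul_one _
      have ha2wpos : 0 < alpha2 (listProd A w) := alpha2_pos (det_listProd_ne hAdet w)
      have h1 : alpha2 (listProd A w) * g ≤ dist z x := by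
        calc alpha2 (listProd A w) * g ≤ alpha2 (listProd A u) * g :=
            mul_le_mul_of_nonneg_right ha2w hg0.le
          _ ≤ alpha2 (listProd A u) * dist pz px :=
            mul_le_mul_of_nonneg_left hgap1 (alpha2_nonneg _)
          _ ≤ dist z x := hdistlow
      have h2 : dist z x ≤ (g/2) * alpha2 (listProd A w) := by
        calc dist z x ≤ c₁⁻¹ * alpha2 (listProd A w) := hzdist
          _ ≤ (g/2) * alpha2 (listProd A w) :=
            mul_le_mul_of_nonneg_right hc₁inv (alpha2_nonneg _)
      nlinarith
  · -- second inclusion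
    intro z hz
    obtain ⟨hzimg, hzline⟩ := hz
    have hzΛ : z ∈ Λ := mapWord_image_subset hΛeq w hzimg
    refine ⟨hzΛ, hzline, ?_⟩
    obtain ⟨z', hz'Λ, hz'e⟩ := hzimg
    obtain ⟨x', hx'Λ, hx'e⟩ := hxw
    set y := wordSeq w i with hydef
    set n := w.length with hndef
    have hyP : prodRev A y n = listProd A w := wordSeq_prodRev A w i
    have hyS : shift^[n] y = i := wordSeq_shift w i
    have hsub2 : z - x = toE2 ((listProd A w).mulVec (z' - x')) := by
      rw [← hz'e, ← hx'e, mapWord_sub]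
    have hmem : z - x ∈ Submodule.map (Matrix.toEuclideanLin (prodRev A y n)) (ess y) := by
      rw [ess_equivariant heqv y n, hyS]
      exact hzline
    obtain ⟨p, hp, hps⟩ := hmem
    have hps2 : (listProd A w).mulVec p = (listProd A w).mulVec (z' - x') := by
      have h1 : toE2 ((prodRev A y n).mulVec p) = z - x := hps
      rw [hyP, hsub2] at h1
      exact congrArg WithLp.ofLp h1
    have hpe : p = z' - x' := WithLp.ofLp_injective (p := 2) (V := Fin 2 → ℝ) (mulVec_injective (det_listProd_ne hAdet w) hps2)
    rw [he3 y] at hp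
    obtain ⟨c, hc⟩ := Submodule.mem_span_singleton.mp hp
    have hzx : z - x = toE2 ((listProd A w).mulVec (c • e y)) := by
      rw [hsub2, ← WithLp.ofLp_sub, ← hpe, ← hc, WithLp.ofLp_smul]
    have hnorm : dist z x ≤ |c| * (K * alpha2 (listProd A w)) := by
      rw [dist_eq_norm, hzx, ← hyP]
      have h3 : (prodRev A y n).mulVec (c • (e y : E2)) = c • (prodRev A y n).mulVec (e y) :=
        Matrix.mulVec_smul _ _ _
      rw [h3]
      show ‖c • toE2 ((prodRev A y n).mulVec (e y))‖ ≤ _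
      rw [norm_smul, Real.norm_eq_abs]
      have h4 : aN A e y n ≤ K * alpha2 (prodRev A y n) := hK y n
      rw [hyP] at h4
      have h5 : ‖toE2 ((prodRev A y n).mulVec (e y))‖ = aN A e y n := rfl
      rw [h5, hyP]
      exact mul_le_mul_of_nonneg_left h4 (abs_nonneg c)
    have hcD : |c| ≤ D := by
      have h6 : ‖z' - x'‖ = |c| := by
        rw [← hpe, ← hc, norm_smul, Real.norm_eq_abs, he2, mul_one]
      have h7 : dist z' x' ≤ D := hdistD z' hz'Λ x' hx'Λ
      rw [dist_eq_norm] at h7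
      linarith [h6 ▸ h7]
    have ha2nn : 0 ≤ alpha2 (listProd A w) := alpha2_nonneg _
    calc dist z x ≤ |c| * (K * alpha2 (listProd A w)) := hnorm
      _ ≤ D * (K * alpha2 (listProd A w)) := by
          apply mul_le_mul_of_nonneg_right hcD
          exact mul_nonneg (by linarith) ha2nn
      _ = (K * D) * alpha2 (listProd A w) := by ring
      _ ≤ c₁ * alpha2 (listProd A w) := by
          apply mul_le_mul_of_nonneg_right _ ha2nn
          rw [hc₁def]
          linarith

end
end

section
/- Suppose each A_i is lower triangular, A_i = [[a_i, 0],[b_i, c_i]] with 0 < |a_i|, |c_i| < 1, and |a_i| < |c_i| for every i. Then for every i = (i₀, i₁, …) ∈ Σ⁺ the strong-stable direction e_ss(i) is the line spanned by the vector (1, ϑ(i)), where ϑ(i) = −∑_{n=0}^∞ (b_{iₙ} a_{i_{n−1}} ⋯ a_{i₀})/(c_{iₙ} c_{i_{n−1}} ⋯ c_{i₀}); consequently ϑ(i) = g_{i₀}(ϑ(σ i)) for g_j(x) = (a_j/c_j) x − b_j/c_j, so the set of slopes {ϑ(i) : i ∈ Σ⁺} is the attractor of the self-similar IFS {g_j}_{j=1}^N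 on ℝ. Equivalently, A_{i₀}·(1, ϑ(i)) = a_{i₀}·(1, ϑ(σ i)) for every i ∈ Σ⁺. -/
open MeasureTheory Filter Metric Set
open scoped ENNReal Topology NNReal

noncomputable section

section AuxSS

lemma E2_norm_le_aux (w : Fin 2 → ℝ) : ‖toE2 w‖ ≤ |w 0| + |w 1| := by
  rw [EuclideanSpace.norm_eq]
  rw [← Real.sqrt_sq (by positivity : (0:ℝ) ≤ |w 0| + |w 1|)]
  apply Real.sqrt_le_sqrt
  simp only [Fin.sum_univ_two, toE2, WithLp.ofLp_toLp, Real.norm_eq_abs]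
  nlinarith [abs_nonneg (w 0), abs_nonneg (w 1), sq_abs (w 0), sq_abs (w 1)]

lemma E2_abs_le_aux (w : Fin 2 → ℝ) (i : Fin 2) : |w i| ≤ ‖toE2 w‖ := by
  rw [EuclideanSpace.norm_eq, ← Real.sqrt_sq (abs_nonneg (w i))]
  apply Real.sqrt_le_sqrt
  have := Finset.single_le_sum (f := fun j => ‖(toE2 w) j‖ ^ 2)
    (fun j _ => by positivity) (Finset.mem_univ i)
  simpa [toE2, sq_abs] using this

lemma E2_abs_le_aux' (v : E2) (i : Fin 2) : |v i| ≤ ‖v‖ := E2_abs_le_aux v i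

lemma decomp_aux (t : ℝ) (v : Fin 2 → ℝ) :
    v = v 0 • ![(1:ℝ), t] + (v 1 - v 0 * t) • ![0, 1] := by
  funext i; fin_cases i <;> simp

end AuxSS

set_option maxHeartbeats 3200000 in
/-- **Lemma.** For lower triangular matrices with `|a_i| < |c_i|`, the strong-stable
direction of `i ∈ Σ⁺` is spanned by `(1, ϑ(i))` where
`ϑ(i) = -∑ₙ (b_{iₙ} a_{i_{n-1}}⋯a_{i₀})/(c_{iₙ}⋯c_{i₀})`; consequently
`ϑ(i) = g_{i₀}(ϑ(σi))` for `g_j(x) = (a_j/c_j)x - b_j/c_j`, so the (compact) set of slopes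
is the attractor of the self-similar IFS `{g_j}`; equivalently
`A_{i₀}·(1, ϑ(i)) = a_{i₀}·(1, ϑ(σi))`. -/
theorem statement16
    {N : ℕ} (hN : 0 < N) (a b c : Fin N → ℝ)
    (ha : ∀ i, 0 < |a i| ∧ |a i| < 1) (hc : ∀ i, 0 < |c i| ∧ |c i| < 1)
    (A : Fin N → Matrix (Fin 2) (Fin 2) ℝ)
    (hAdef : ∀ i, A i = !![a i, 0; b i, c i])
    (hcontr : ∀ i, alpha1 (A i) < 1)
    (hac : ∀ i, |a i| < |c i|)
    (ess : (ℕ → Fin N) → Submodule ℝ E2) (hess : IsStrongStableDirections A ess)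
    (ϑ : (ℕ → Fin N) → ℝ)
    (hϑ : ∀ x, ϑ x = -∑' n : ℕ,
      (b (x n) * ∏ k ∈ Finset.range n, a (x k)) / ∏ k ∈ Finset.range (n + 1), c (x k)) :
    (∀ x, ess x = Submodule.span ℝ {toE2 ![1, ϑ x]}) ∧
    (∀ x, ϑ x = (a (x 0) / c (x 0)) * ϑ (shift x) - b (x 0) / c (x 0)) ∧
    (IsCompact (Set.range ϑ) ∧ (Set.range ϑ).Nonempty ∧
      Set.range ϑ = ⋃ j, (fun y => (a j / c j) * y - b j / c j) '' Set.range ϑ) ∧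
    (∀ x, toE2 ((A (x 0)).mulVec (toE2 ![1, ϑ x])) = a (x 0) • toE2 ![1, ϑ (shift x)]) := by
  classical
  haveI hNe : Nonempty (Fin N) := ⟨⟨0, hN⟩⟩
  have hc0 : ∀ i, c i ≠ 0 := fun i => by
    have := (hc i).1; rwa [abs_pos] at this
  set r : ℝ := Finset.univ.sup' Finset.univ_nonempty (fun i => |a i| / |c i|) with hr_def
  set B : ℝ := Finset.univ.sup' Finset.univ_nonempty (fun i => |b i| / |c i|) with hB_def
  have hr0 : 0 ≤ r := by
    obtain ⟨i⟩ := hNe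
    rw [hr_def]
    have h0 : (0:ℝ) ≤ |a i| / |c i| := by positivity
    exact le_trans h0 (Finset.le_sup' (fun i => |a i| / |c i|) (Finset.mem_univ i))
  have hr1 : r < 1 := by
    rw [hr_def, Finset.sup'_lt_iff]
    intro i _
    exact (div_lt_one (hc i).1).2 (hac i)
  have hri : ∀ i, |a i| ≤ r * |c i| := by
    intro i
    have h1 : |a i| / |c i| ≤ r := by
      rw [hr_def]; exact Finset.le_sup' (fun i => |a i| / |c i|) (Finset.mem_univ i)
    have h2 : (0:ℝ) < |c i| := (hc i).1
    calc |a i| = (|a i| / |c i|) * |c i| := by field_simp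
    _ ≤ r * |c i| := mul_le_mul_of_nonneg_right h1 (abs_nonneg _)
  have hB0 : 0 ≤ B := by
    obtain ⟨i⟩ := hNe
    rw [hB_def]
    have h0 : (0:ℝ) ≤ |b i| / |c i| := by positivity
    exact le_trans h0 (Finset.le_sup' (fun i => |b i| / |c i|) (Finset.mem_univ i))
  have hBi : ∀ i, |b i| / |c i| ≤ B := fun i => by
    rw [hB_def]; exact Finset.le_sup' (fun i => |b i| / |c i|) (Finset.mem_univ i)
  set K : ℝ := B / (1 - r) with hK_def
  have hK0 : 0 ≤ K := div_nonneg hB0 (by linarith)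
  set term : (ℕ → Fin N) → ℕ → ℝ := fun x n =>
    (b (x n) * ∏ k ∈ Finset.range n, a (x k)) / ∏ k ∈ Finset.range (n + 1), c (x k)
    with hterm_def
  have hϑ' : ∀ x, ϑ x = -∑' n, term x n := hϑ
  have hterm_eq : ∀ x n, term x n =
      (b (x n) / c (x n)) * ∏ k ∈ Finset.range n, (a (x k) / c (x k)) := by
    intro x n
    show (b (x n) * ∏ k ∈ Finset.range n, a (x k)) / ∏ k ∈ Finset.range (n + 1), c (x k) = _
    rw [Finset.prod_div_distrib, Finset.prod_range_succ]
    have h1 : (∏ k ∈ Finset.range n, c (x k)) ≠ 0 :=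
      Finset.prod_ne_zero_iff.2 fun k _ => hc0 _
    rw [div_mul_div_comm, mul_comm (c (x n)) (∏ k ∈ Finset.range n, c (x k))]
  have htermabs : ∀ x n, |term x n| ≤ B * r ^ n := by
    intro x n
    rw [hterm_eq, abs_mul, abs_div, Finset.abs_prod]
    have h1 : ∏ k ∈ Finset.range n, |a (x k) / c (x k)| ≤ r ^ n := by
      calc ∏ k ∈ Finset.range n, |a (x k) / c (x k)| ≤ ∏ _k ∈ Finset.range n, r := by
            refine Finset.prod_le_prod (fun k _ => abs_nonneg _) (fun k _ => ?_)
            rw [abs_div]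
            exact (div_le_iff₀ (hc (x k)).1).2 (hri (x k))
        _ = r ^ n := by rw [Finset.prod_const, Finset.card_range]
    have h2 : |b (x n)| / |c (x n)| ≤ B := hBi _
    have h3 : (0:ℝ) ≤ |b (x n)| / |c (x n)| := by positivity
    have h4 : (0:ℝ) ≤ ∏ k ∈ Finset.range n, |a (x k) / c (x k)| :=
      Finset.prod_nonneg fun k _ => abs_nonneg _
    exact mul_le_mul h2 h1 h4 hB0
  have hsum : ∀ x, Summable (term x) := fun x =>
    Summable.of_norm_bounded ((summable_geometric_of_lt_one hr0 hr1).mul_left B)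
      (fun n => by simpa [Real.norm_eq_abs] using htermabs x n)
  have hϑK : ∀ x, |ϑ x| ≤ K := by
    intro x
    rw [hϑ' x, abs_neg]
    calc |∑' n, term x n| ≤ ∑' n, |term x n| := by
          simpa [Real.norm_eq_abs] using norm_tsum_le_tsum_norm (f := term x)
            (by simpa [Real.norm_eq_abs] using (hsum x).abs)
      _ ≤ ∑' n, B * r ^ n := by
          exact Summable.tsum_le_tsum (htermabs x) (hsum x).abs
            ((summable_geometric_of_lt_one hr0 hr1).mul_left B)
      _ = B * (1 - r)⁻¹ := by rw [tsum_mul_left, tsum_geometric_of_lt_one hr0 hr1]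
      _ = K := (div_eq_mul_inv B (1-r)).symm
  have hrec : ∀ x, ϑ x = (a (x 0) / c (x 0)) * ϑ (shift x) - b (x 0) / c (x 0) := by
    intro x
    have h0 : term x 0 = b (x 0) / c (x 0) := by simp [hterm_eq]
    have hshiftterm : ∀ n, term x (n + 1) = (a (x 0) / c (x 0)) * term (shift x) n := by
      intro n
      rw [hterm_eq, hterm_eq, Finset.prod_range_succ']
      simp only [shift]
      ring
    rw [hϑ' x, Summable.tsum_eq_zero_add (hsum x), h0, tsum_congr hshiftterm, tsum_mul_left,
      hϑ' (shift x)]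
    ring
  have key : ∀ x, b (x 0) + c (x 0) * ϑ x = a (x 0) * ϑ (shift x) := by
    intro x
    have hcx := hc0 (x 0)
    have h : c (x 0) * ϑ x = a (x 0) * ϑ (shift x) - b (x 0) := by
      rw [hrec x]
      field_simp
    linarith
  have hA4 : ∀ x : ℕ → Fin N, (A (x 0)).mulVec ![1, ϑ x] = a (x 0) • ![1, ϑ (shift x)] := by
    intro x
    funext i
    fin_cases i
    · simp [hAdef, Matrix.mulVec, dotProduct, Fin.sum_univ_two]
    · simp [hAdef, Matrix.mulVec, dotProduct, Fin.sum_univ_two]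
      linarith [key x]
  have hA2 : ∀ j : Fin N, (A j).mulVec ![0, 1] = c j • ![0, 1] := by
    intro j
    funext i
    fin_cases i <;> simp [hAdef, Matrix.mulVec, dotProduct, Fin.sum_univ_two]
  have hP0 : ∀ x : ℕ → Fin N, prodRev A x 0 = 1 := fun x => by simp [prodRev, listProd]
  have hPs : ∀ (x : ℕ → Fin N) n, prodRev A x (n + 1) = A (x n) * prodRev A x n := by
    intro x n
    simp [prodRev, listProd, List.range_succ]
  set sh : ℕ → (ℕ → Fin N) → (ℕ → Fin N) := fun n x m => x (m + n) with hsh_def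
  have hsh0 : ∀ x : ℕ → Fin N, sh 0 x = x := fun x => funext fun m => rfl
  have hshs : ∀ (n : ℕ) (x : ℕ → Fin N), shift (sh n x) = sh (n + 1) x := by
    intro n x; funext m
    show x (m + 1 + n) = x (m + (n + 1))
    congr 1; omega
  have hsh0' : ∀ (n : ℕ) (x : ℕ → Fin N), (sh n x) 0 = x n :=
    fun n x => congrArg x (Nat.zero_add n)
  have L1 : ∀ (x : ℕ → Fin N) (n : ℕ), (prodRev A x n).mulVec ![1, ϑ x] =
      (∏ k ∈ Finset.range n, a (x k)) • ![1, ϑ (sh n x)] := by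
    intro x n
    induction n with
    | zero => rw [hP0, Matrix.one_mulVec, hsh0]; simp
    | succ n ih =>
        rw [hPs, ← Matrix.mulVec_mulVec, ih, Matrix.mulVec_smul]
        have h := hA4 (sh n x)
        rw [hsh0'] at h
        rw [h, hshs, smul_smul, Finset.prod_range_succ]
  have L2 : ∀ (x : ℕ → Fin N) (n : ℕ), (prodRev A x n).mulVec ![0, 1] =
      (∏ k ∈ Finset.range n, c (x k)) • ![0, 1] := by
    intro x n
    induction n with
    | zero => rw [hP0, Matrix.one_mulVec]; simp
    | succ n ih =>
        rw [hPs, ← Matrix.mulVec_mulVec, ih, Matrix.mulVec_smul, hA2, smul_smul,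
          Finset.prod_range_succ]
  have hMv : ∀ (x : ℕ → Fin N) (n : ℕ) (v : Fin 2 → ℝ),
      (prodRev A x n).mulVec v =
        (v 0 * ∏ k ∈ Finset.range n, a (x k)) • ![1, ϑ (sh n x)] +
        ((v 1 - v 0 * ϑ x) * ∏ k ∈ Finset.range n, c (x k)) • ![0, 1] := by
    intro x n v
    conv_lhs => rw [decomp_aux (ϑ x) v]
    rw [Matrix.mulVec_add, Matrix.mulVec_smul, Matrix.mulVec_smul, L1, L2, smul_smul, smul_smul]
  have hMv0 : ∀ (x : ℕ → Fin N) (n : ℕ) (v : Fin 2 → ℝ),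
      (prodRev A x n).mulVec v 0 = v 0 * ∏ k ∈ Finset.range n, a (x k) := by
    intro x n v; rw [hMv]; simp
  have hMv1 : ∀ (x : ℕ → Fin N) (n : ℕ) (v : Fin 2 → ℝ),
      (prodRev A x n).mulVec v 1 =
        v 0 * (∏ k ∈ Finset.range n, a (x k)) * ϑ (sh n x) +
        (v 1 - v 0 * ϑ x) * ∏ k ∈ Finset.range n, c (x k) := by
    intro x n v; rw [hMv]; simp
  have hPa : ∀ (x : ℕ → Fin N) (n : ℕ),
      ∏ k ∈ Finset.range n, |a (x k)| ≤ r ^ n * ∏ k ∈ Finset.range n, |c (x k)| := by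
    intro x n
    calc ∏ k ∈ Finset.range n, |a (x k)| ≤ ∏ k ∈ Finset.range n, (r * |c (x k)|) := by
          exact Finset.prod_le_prod (fun k _ => abs_nonneg _) (fun k _ => hri _)
      _ = r ^ n * ∏ k ∈ Finset.range n, |c (x k)| := by
          rw [Finset.prod_mul_distrib, Finset.prod_const, Finset.card_range]
  have hPc_pos : ∀ (x : ℕ → Fin N) (n : ℕ), 0 < ∏ k ∈ Finset.range n, |c (x k)| :=
    fun x n => Finset.prod_pos fun k _ => (hc (x k)).1
  have hrn1 : ∀ n : ℕ, r ^ n ≤ 1 := fun n => pow_le_one₀ hr0 hr1.le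
  have halpha : ∀ (x : ℕ → Fin N) (n : ℕ),
      alpha1 (prodRev A x n) ≤ (2 + 2 * K) * ∏ k ∈ Finset.range n, |c (x k)| := by
    intro x n
    have hQpos := hPc_pos x n
    apply ContinuousLinearMap.opNorm_le_bound _ (by positivity)
    intro v
    have hval : (LinearMap.toContinuousLinearMap (Matrix.toEuclideanLin (prodRev A x n))) v
        = toE2 ((prodRev A x n).mulVec v) := rfl
    rw [hval]
    have h1 : |∏ k ∈ Finset.range n, a (x k)| ≤ ∏ k ∈ Finset.range n, |c (x k)| := by
      rw [Finset.abs_prod]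
      calc ∏ k ∈ Finset.range n, |a (x k)| ≤ r ^ n * ∏ k ∈ Finset.range n, |c (x k)| := hPa x n
      _ ≤ 1 * ∏ k ∈ Finset.range n, |c (x k)| := by
          exact mul_le_mul_of_nonneg_right (hrn1 n) (le_of_lt hQpos)
      _ = ∏ k ∈ Finset.range n, |c (x k)| := one_mul _
    have h2 : |ϑ (sh n x)| ≤ K := hϑK _
    have h3 : |ϑ x| ≤ K := hϑK _
    have h4 : |v 0| ≤ ‖v‖ := E2_abs_le_aux' v 0
    have h5 : |v 1| ≤ ‖v‖ := E2_abs_le_aux' v 1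
    have e1 : |v 0 * ∏ k ∈ Finset.range n, a (x k)| ≤ ‖v‖ * ∏ k ∈ Finset.range n, |c (x k)| := by
      rw [abs_mul]; exact mul_le_mul h4 h1 (abs_nonneg _) (norm_nonneg _)
    have e2 : |v 0 * (∏ k ∈ Finset.range n, a (x k)) * ϑ (sh n x)| ≤
        ‖v‖ * (∏ k ∈ Finset.range n, |c (x k)|) * K := by
      rw [abs_mul, abs_mul]
      exact mul_le_mul (mul_le_mul h4 h1 (abs_nonneg _) (norm_nonneg _)) h2 (abs_nonneg _)
        (by positivity)
    have e3 : |(v 1 - v 0 * ϑ x) * ∏ k ∈ Finset.range n, c (x k)| ≤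
        (‖v‖ + ‖v‖ * K) * ∏ k ∈ Finset.range n, |c (x k)| := by
      rw [abs_mul, Finset.abs_prod]
      apply mul_le_mul _ le_rfl (Finset.prod_nonneg fun k _ => abs_nonneg _) (by positivity)
      calc |v 1 - v 0 * ϑ x| ≤ |v 1| + |v 0 * ϑ x| := abs_sub _ _
        _ ≤ ‖v‖ + ‖v‖ * K := by
            rw [abs_mul]
            exact add_le_add h5 (mul_le_mul h4 h3 (abs_nonneg _) (norm_nonneg _))
    calc ‖toE2 ((prodRev A x n).mulVec v)‖
        ≤ |(prodRev A x n).mulVec v 0| + |(prodRev A x n).mulVec v 1| := E2_norm_le_aux _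
      _ ≤ |v 0 * ∏ k ∈ Finset.range n, a (x k)| +
          (|v 0 * (∏ k ∈ Finset.range n, a (x k)) * ϑ (sh n x)| +
           |(v 1 - v 0 * ϑ x) * ∏ k ∈ Finset.range n, c (x k)|) := by
          rw [hMv0, hMv1]
          exact add_le_add le_rfl (abs_add_le _ _)
      _ ≤ ‖v‖ * ∏ k ∈ Finset.range n, |c (x k)| +
          (‖v‖ * (∏ k ∈ Finset.range n, |c (x k)|) * K +
           (‖v‖ + ‖v‖ * K) * ∏ k ∈ Finset.range n, |c (x k)|) := by
          exact add_le_add e1 (add_le_add e2 e3)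
      _ = (2 + 2 * K) * (∏ k ∈ Finset.range n, |c (x k)|) * ‖v‖ := by ring
  obtain ⟨hrank, hequiv, C, hC, δ, hδ, hbound⟩ := hess
  have part2 := hrec
  have part1 : ∀ x, ess x = Submodule.span ℝ {toE2 ![1, ϑ x]} := by
    intro x
    have hspan_ne : toE2 ![1, ϑ x] ≠ 0 := by
      intro h
      have h0 : (toE2 ![1, ϑ x]) 0 = (0 : E2) 0 := by rw [h]
      simpa [toE2] using h0
    have hle : ess x ≤ Submodule.span ℝ {toE2 ![1, ϑ x]} := by
      intro v hv
      have hsn : ∀ n : ℕ, |v 1 - v 0 * ϑ x| ≤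
          C * (2 + 2 * K) * ‖v‖ * Real.exp (-δ * n) + K * ‖v‖ * r ^ n := by
        intro n
        have hQpos := hPc_pos x n
        have h1 : ‖toE2 ((prodRev A x n).mulVec v)‖ ≤
            C * Real.exp (-δ * n) * ((2 + 2 * K) * ∏ k ∈ Finset.range n, |c (x k)|) * ‖v‖ := by
          calc ‖toE2 ((prodRev A x n).mulVec v)‖
              ≤ C * Real.exp (-δ * n) * alpha1 (prodRev A x n) * ‖v‖ := hbound x n v hv
            _ ≤ _ := by
                have h := halpha x n
                have hCe : (0:ℝ) ≤ C * Real.exp (-δ * n) := by positivity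
                exact mul_le_mul_of_nonneg_right
                  (mul_le_mul_of_nonneg_left h hCe) (norm_nonneg _)
        have hcomp : (v 1 - v 0 * ϑ x) * ∏ k ∈ Finset.range n, c (x k) =
            (prodRev A x n).mulVec v 1 -
              v 0 * (∏ k ∈ Finset.range n, a (x k)) * ϑ (sh n x) := by
          rw [hMv1]; ring
        have hb1 : |(prodRev A x n).mulVec v 1| ≤ ‖toE2 ((prodRev A x n).mulVec v)‖ :=
          E2_abs_le_aux _ 1
        have hb2 : |v 0 * (∏ k ∈ Finset.range n, a (x k)) * ϑ (sh n x)| ≤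
            ‖v‖ * (r ^ n * ∏ k ∈ Finset.range n, |c (x k)|) * K := by
          rw [abs_mul, abs_mul, Finset.abs_prod]
          have h4 : |v 0| ≤ ‖v‖ := E2_abs_le_aux' v 0
          exact mul_le_mul (mul_le_mul h4 (hPa x n)
            (Finset.prod_nonneg fun k _ => abs_nonneg _) (norm_nonneg _)) (hϑK _)
            (abs_nonneg _) (by positivity)
        have h2 : |v 1 - v 0 * ϑ x| * ∏ k ∈ Finset.range n, |c (x k)| ≤
            ‖toE2 ((prodRev A x n).mulVec v)‖ +
              ‖v‖ * (r ^ n * ∏ k ∈ Finset.range n, |c (x k)|) * K := by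
          calc |v 1 - v 0 * ϑ x| * ∏ k ∈ Finset.range n, |c (x k)|
              = |(v 1 - v 0 * ϑ x) * ∏ k ∈ Finset.range n, c (x k)| := by
                rw [abs_mul, Finset.abs_prod]
            _ = |(prodRev A x n).mulVec v 1 -
                  v 0 * (∏ k ∈ Finset.range n, a (x k)) * ϑ (sh n x)| := by rw [hcomp]
            _ ≤ |(prodRev A x n).mulVec v 1| +
                  |v 0 * (∏ k ∈ Finset.range n, a (x k)) * ϑ (sh n x)| := abs_sub _ _
            _ ≤ _ := add_le_add hb1 hb2
        have h3 : |v 1 - v 0 * ϑ x| * ∏ k ∈ Finset.range n, |c (x k)| ≤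
            (C * (2 + 2 * K) * ‖v‖ * Real.exp (-δ * n) + K * ‖v‖ * r ^ n) *
              ∏ k ∈ Finset.range n, |c (x k)| := by
          calc |v 1 - v 0 * ϑ x| * ∏ k ∈ Finset.range n, |c (x k)|
              ≤ ‖toE2 ((prodRev A x n).mulVec v)‖ +
                ‖v‖ * (r ^ n * ∏ k ∈ Finset.range n, |c (x k)|) * K := h2
            _ ≤ C * Real.exp (-δ * n) * ((2 + 2 * K) * ∏ k ∈ Finset.range n, |c (x k)|) * ‖v‖ +
                ‖v‖ * (r ^ n * ∏ k ∈ Finset.range n, |c (x k)|) * K := by linarith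
            _ = _ := by ring
        exact le_of_mul_le_mul_right h3 hQpos
      have hs0 : v 1 - v 0 * ϑ x = 0 := by
        have hlim : Tendsto (fun n : ℕ =>
            C * (2 + 2 * K) * ‖v‖ * Real.exp (-δ * n) + K * ‖v‖ * r ^ n) atTop (𝓝 0) := by
          have he : Tendsto (fun n : ℕ => Real.exp (-δ * (n : ℝ))) atTop (𝓝 0) := by
            have h1 : Real.exp (-δ) < 1 := by
              rw [Real.exp_lt_one_iff]; linarith
            have := tendsto_pow_atTop_nhds_zero_of_lt_one (le_of_lt (Real.exp_pos (-δ))) h1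
            refine this.congr fun n => ?_
            rw [← Real.exp_nat_mul]; ring_nf
          have hr' := tendsto_pow_atTop_nhds_zero_of_lt_one hr0 hr1
          have := (he.const_mul (C * (2 + 2 * K) * ‖v‖)).add (hr'.const_mul (K * ‖v‖))
          simpa using this
        have hle0 : |v 1 - v 0 * ϑ x| ≤ 0 := ge_of_tendsto' hlim hsn
        exact abs_eq_zero.1 (le_antisymm hle0 (abs_nonneg _))
      rw [Submodule.mem_span_singleton]
      refine ⟨v 0, ?_⟩
      have hd := decomp_aux (ϑ x) v
      rw [hs0, zero_smul, add_zero] at hd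
      rw [← WithLp.toLp_smul, toE2, WithLp.ofLp_toLp, ← hd, WithLp.toLp_ofLp]
    exact Submodule.eq_of_le_of_finrank_le hle
      (by rw [finrank_span_singleton hspan_ne, hrank x])
  have hcont : Continuous ϑ := by
    have hc1 : ∀ n : ℕ, Continuous fun x : ℕ → Fin N => term x n := by
      intro n
      have hgc : ∀ (g : Fin N → ℝ) (k : ℕ), Continuous fun x : ℕ → Fin N => g (x k) :=
        fun g k => Continuous.comp continuous_of_discreteTopology (continuous_apply k)
      apply Continuous.div
      · exact (hgc b n).mul (continuous_finset_prod _ fun k _ => hgc a k)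
      · exact continuous_finset_prod _ fun k _ => hgc c k
      · intro x
        exact Finset.prod_ne_zero_iff.2 fun k _ => hc0 _
    have hct : Continuous fun x : ℕ → Fin N => ∑' n, term x n :=
      continuous_tsum hc1 ((summable_geometric_of_lt_one hr0 hr1).mul_left B)
        (fun n x => by simpa [Real.norm_eq_abs] using htermabs x n)
    have heq : ϑ = fun x => -∑' n, term x n := funext hϑ'
    rw [heq]; exact hct.neg
  have hself : Set.range ϑ = ⋃ j, (fun y => (a j / c j) * y - b j / c j) '' Set.range ϑ := by
    ext y
    simp only [Set.mem_range, Set.mem_iUnion, Set.mem_image]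
    constructor
    · rintro ⟨x, rfl⟩
      exact ⟨x 0, ϑ (shift x), ⟨shift x, rfl⟩, (hrec x).symm⟩
    · rintro ⟨j, y', ⟨x, rfl⟩, rfl⟩
      refine ⟨fun n => Nat.casesOn n j x, ?_⟩
      have h1 := hrec (fun n => Nat.casesOn n j x)
      have h2 : shift (fun n => Nat.casesOn n j x) = x := funext fun m => rfl
      rw [h2] at h1
      simpa using h1
  refine ⟨part1, part2, ⟨isCompact_range hcont,
    ⟨ϑ (fun _ => ⟨0, hN⟩), Set.mem_range_self _⟩, hself⟩, fun x => by
      simp only [toE2, WithLp.ofLp_toLp]; rw [hA4 x, WithLp.toLp_smul]⟩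

end
end
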